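/- arXiv:1010.2320 — 9 statements merged into one kernel-verified Lean document; each statement's English description precedes it below -/
import Mathlib

section
/- Let A ⊂ ℝⁿ be a compact uniformly convex set with modulus of convexity δ_A. Let ε ∈ (0, diam A) and Δ ∈ (0,1/2). Let p₁, p₂ ∈ ℝⁿ with ‖p₁‖ = 1 and 1 − Δ²/2 ≤ ‖p₂‖ ≤ 1, and let x₁, x₂ ∈ A be points with ⟨p₁, x₁⟩ = s(p₁, A) and ⟨p₂, x₂⟩ = s(p₂, A). If ‖p₁ − p₂‖ < (4 − Δ²)·δ_A(ε)/ε, then ‖x₁ − x₂‖ < ε. -/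
open Set Metric Pointwise

/-- Supporting function `s(p, A) = sup_{x ∈ A} ⟪p, x⟫`. -/
noncomputable def suppF {n : ℕ} (p : EuclideanSpace ℝ (Fin n))
    (A : Set (EuclideanSpace ℝ (Fin n))) : ℝ :=
  sSup ((fun x => (inner ℝ p x : ℝ)) '' A)

/-- Modulus of convexity of a set `A`. -/
noncomputable def modConv {n : ℕ} (A : Set (EuclideanSpace ℝ (Fin n))) (ε : ℝ) : ℝ :=
  sSup {δ : ℝ | 0 ≤ δ ∧ ∀ x₁ ∈ A, ∀ x₂ ∈ A, ‖x₁ - x₂‖ = ε →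
    Metric.closedBall (midpoint ℝ x₁ x₂) δ ⊆ A}

/-- `A` is uniformly convex: its modulus of convexity is positive on `(0, diam A)`. -/
def UnifConvex {n : ℕ} (A : Set (EuclideanSpace ℝ (Fin n))) : Prop :=
  ∀ ε : ℝ, 0 < ε → ε < Metric.diam A → 0 < modConv A ε

/-- `C` is a grid with step `Δ`: a finite set of unit vectors such that every nonzero `p`
whose normalization is not in `C` is a positive combination of grid vectors that are
pairwise `Δ`-close. -/
def IsGrid {n : ℕ} (C : Finset (EuclideanSpace ℝ (Fin n))) (Δ : ℝ) : Prop :=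
  (∀ p ∈ C, ‖p‖ = 1) ∧
  ∀ p : EuclideanSpace ℝ (Fin n), p ≠ 0 → ‖p‖⁻¹ • p ∉ C →
    ∃ (k : ℕ) (q : Fin k → EuclideanSpace ℝ (Fin n)) (α : Fin k → ℝ),
      (∀ i, q i ∈ C) ∧ (∀ i, 0 < α i) ∧ p = ∑ i, α i • q i ∧
      ∀ i j, ‖q i - q j‖ < Δ

/-- External polyhedral approximation of `A` on the grid `C`. -/
def polyApprox {n : ℕ} (C : Finset (EuclideanSpace ℝ (Fin n)))
    (A : Set (EuclideanSpace ℝ (Fin n))) : Set (EuclideanSpace ℝ (Fin n)) :=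
  {x | ∀ p ∈ C, (inner ℝ p x : ℝ) ≤ suppF p A}

/-- Geometric (Minkowski–Pontryagin) difference `B ⊖ A = {x | x + A ⊆ B}`. -/
def geomDiff {n : ℕ} (B A : Set (EuclideanSpace ℝ (Fin n))) :
    Set (EuclideanSpace ℝ (Fin n)) :=
  {x | ∀ a ∈ A, x + a ∈ B}


lemma le_suppF {n : ℕ} (p : EuclideanSpace ℝ (Fin n)) {A : Set (EuclideanSpace ℝ (Fin n))}
    (hA : IsCompact A) {z : EuclideanSpace ℝ (Fin n)} (hz : z ∈ A) :
    (inner ℝ p z : ℝ) ≤ suppF p A := by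
  have hc : Continuous fun x : EuclideanSpace ℝ (Fin n) => (inner ℝ p x : ℝ) :=
    continuous_const.inner continuous_id
  exact le_csSup ((hA.image hc).bddAbove) ⟨z, hz, rfl⟩

set_option maxHeartbeats 1000000 in
/-- Lemma 2.3: for a compact uniformly convex set, maximizers of close
linear functionals are close. -/
theorem maximizers_close_of_functionals_close
    (n : ℕ) (A : Set (EuclideanSpace ℝ (Fin n)))
    (hA : IsCompact A) (hconv : Convex ℝ A) (huc : UnifConvex A)
    (ε Δ : ℝ) (hε : ε ∈ Set.Ioo 0 (Metric.diam A)) (hΔ : Δ ∈ Set.Ioo (0 : ℝ) (1/2))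
    (p₁ p₂ x₁ x₂ : EuclideanSpace ℝ (Fin n))
    (hp₁ : ‖p₁‖ = 1) (hp₂ : 1 - Δ^2 / 2 ≤ ‖p₂‖) (hp₂' : ‖p₂‖ ≤ 1)
    (hx₁ : x₁ ∈ A) (hx₂ : x₂ ∈ A)
    (hs₁ : (inner ℝ p₁ x₁ : ℝ) = suppF p₁ A) (hs₂ : (inner ℝ p₂ x₂ : ℝ) = suppF p₂ A)
    (hpp : ‖p₁ - p₂‖ < (4 - Δ^2) * modConv A ε / ε) :
    ‖x₁ - x₂‖ < ε := by
  obtain ⟨hε0, hεd⟩ := hε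
  obtain ⟨hΔ0, hΔh⟩ := hΔ
  by_contra hcon
  push_neg at hcon
  set d := ‖x₁ - x₂‖ with hd
  have hd0 : 0 < d := lt_of_lt_of_le hε0 hcon
  set t : ℝ := ε / d with ht
  have ht0 : 0 < t := div_pos hε0 hd0
  have ht1 : t ≤ 1 := (div_le_one hd0).2 hcon
  have htd : t * d = ε := div_mul_cancel₀ ε (ne_of_gt hd0)
  -- points at distance exactly ε
  set y₂ : EuclideanSpace ℝ (Fin n) := x₁ + t • (x₂ - x₁) with hy₂
  set y₁ : EuclideanSpace ℝ (Fin n) := x₂ + t • (x₁ - x₂) with hy₁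
  have hy₂A : y₂ ∈ A := by
    have := hconv hx₁ hx₂ (by linarith : (0:ℝ) ≤ 1 - t) (le_of_lt ht0) (by ring)
    have e : (1 - t) • x₁ + t • x₂ = y₂ := by
      rw [hy₂]; module
    rwa [e] at this
  have hy₁A : y₁ ∈ A := by
    have := hconv hx₂ hx₁ (by linarith : (0:ℝ) ≤ 1 - t) (le_of_lt ht0) (by ring)
    have e : (1 - t) • x₂ + t • x₁ = y₁ := by
      rw [hy₁]; module
    rwa [e] at this
  have hn₂ : ‖x₁ - y₂‖ = ε := by
    have e : x₁ - y₂ = (-t) • (x₂ - x₁) := by rw [hy₂]; module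
    rw [e, norm_smul, norm_neg, Real.norm_eq_abs, abs_of_pos ht0, ← neg_sub x₁ x₂,
      norm_neg, ← hd, htd]
  have hn₁ : ‖x₂ - y₁‖ = ε := by
    have e : x₂ - y₁ = (-t) • (x₁ - x₂) := by rw [hy₁]; module
    rw [e, norm_smul, norm_neg, Real.norm_eq_abs, abs_of_pos ht0, ← hd, htd]
  have hp₂0 : ‖p₂‖ ≠ 0 := by nlinarith
  clear_value d t y₂ y₁
  set S : Set ℝ := {δ : ℝ | 0 ≤ δ ∧ ∀ z₁ ∈ A, ∀ z₂ ∈ A, ‖z₁ - z₂‖ = ε →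
    Metric.closedBall (midpoint ℝ z₁ z₂) δ ⊆ A} with hS
  have hSne : S.Nonempty := by
    refine ⟨0, le_refl 0, fun z₁ hz₁ z₂ hz₂ _ => ?_⟩
    intro w hw
    rw [Metric.mem_closedBall, dist_le_zero] at hw
    rw [hw]
    have h := hconv hz₁ hz₂ (by norm_num : (0:ℝ) ≤ 1/2) (by norm_num : (0:ℝ) ≤ 1/2)
      (by norm_num : (1:ℝ)/2 + 1/2 = 1)
    have e : midpoint ℝ z₁ z₂ = (1/2 : ℝ) • z₁ + (1/2 : ℝ) • z₂ := by
      rw [midpoint_eq_smul_add, invOf_eq_inv]; module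
    rwa [e]
  -- key estimate for each δ' ∈ S
  have key : ∀ δ' ∈ S, δ' ≤ ‖p₁ - p₂‖ * ε / (4 - Δ^2) := by
    intro δ' hδ'
    obtain ⟨hδ'0, hδ'b⟩ := hδ'
    -- estimate for p₁
    have hb₁ : (inner ℝ p₁ (midpoint ℝ x₁ y₂ + δ' • p₁) : ℝ) ≤ (inner ℝ p₁ x₁ : ℝ) := by
      rw [hs₁]
      refine le_suppF p₁ hA (hδ'b x₁ hx₁ y₂ hy₂A hn₂ ?_)
      rw [Metric.mem_closedBall, dist_eq_norm, add_sub_cancel_left, norm_smul,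
        Real.norm_eq_abs, abs_of_nonneg hδ'0, hp₁, mul_one]
    have e₁ : (inner ℝ p₁ (midpoint ℝ x₁ y₂ + δ' • p₁) : ℝ)
        = (inner ℝ p₁ x₁ : ℝ) - (t / 2) * (inner ℝ p₁ (x₁ - x₂) : ℝ) + δ' := by
      have em : midpoint ℝ x₁ y₂ + δ' • p₁ = x₁ - (t/2) • (x₁ - x₂) + δ' • p₁ := by
        rw [midpoint_eq_smul_add, invOf_eq_inv, hy₂]; module
      rw [em, inner_add_right, inner_sub_right, real_inner_smul_right,
        real_inner_smul_right, real_inner_self_eq_norm_sq, hp₁]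
      ring
    have k₁ : (t / 2) * (inner ℝ p₁ (x₁ - x₂) : ℝ) ≥ δ' := by linarith [e₁ ▸ hb₁]
    -- estimate for p₂
    have hb₂ : (inner ℝ p₂ (midpoint ℝ x₂ y₁ + δ' • (‖p₂‖⁻¹ • p₂)) : ℝ)
        ≤ (inner ℝ p₂ x₂ : ℝ) := by
      rw [hs₂]
      refine le_suppF p₂ hA (hδ'b x₂ hx₂ y₁ hy₁A hn₁ ?_)
      rw [Metric.mem_closedBall, dist_eq_norm, add_sub_cancel_left, norm_smul,
        norm_smul, Real.norm_eq_abs, Real.norm_eq_abs, abs_of_nonneg hδ'0,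
        abs_of_nonneg (inv_nonneg.2 (norm_nonneg p₂)), inv_mul_cancel₀ hp₂0, mul_one]
    have e₂ : (inner ℝ p₂ (midpoint ℝ x₂ y₁ + δ' • (‖p₂‖⁻¹ • p₂)) : ℝ)
        = (inner ℝ p₂ x₂ : ℝ) - (t / 2) * (inner ℝ p₂ (x₂ - x₁) : ℝ) + δ' * ‖p₂‖ := by
      have em : midpoint ℝ x₂ y₁ + δ' • (‖p₂‖⁻¹ • p₂)
          = x₂ - (t/2) • (x₂ - x₁) + (δ' * ‖p₂‖⁻¹) • p₂ := by
        rw [midpoint_eq_smul_add, invOf_eq_inv, hy₁, smul_smul]; module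
      rw [em, inner_add_right, inner_sub_right, real_inner_smul_right,
        real_inner_smul_right, real_inner_self_eq_norm_sq]
      have h5 : δ' * ‖p₂‖⁻¹ * ‖p₂‖^2 = δ' * ‖p₂‖ := by
        field_simp
      rw [h5]
    have k₂ : (t / 2) * (inner ℝ p₂ (x₂ - x₁) : ℝ) ≥ δ' * ‖p₂‖ := by
      linarith [e₂ ▸ hb₂]
    -- combine
    have hsum : (inner ℝ (p₁ - p₂) (x₁ - x₂) : ℝ)
        = (inner ℝ p₁ (x₁ - x₂) : ℝ) + (inner ℝ p₂ (x₂ - x₁) : ℝ) := by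
      rw [inner_sub_left, show x₂ - x₁ = -(x₁ - x₂) from (neg_sub x₁ x₂).symm,
        inner_neg_right]
      ring
    have hcs : (inner ℝ (p₁ - p₂) (x₁ - x₂) : ℝ) ≤ ‖p₁ - p₂‖ * d := by
      rw [hd]; exact real_inner_le_norm _ _
    have hlow : (t / 2) * (inner ℝ (p₁ - p₂) (x₁ - x₂) : ℝ) ≥ δ' * (1 + ‖p₂‖) := by
      rw [hsum, mul_add]; linarith
    -- hence δ' * (1 + ‖p₂‖) ≤ (t/2) * ‖p₁ - p₂‖ * d = (ε/2) * ‖p₁-p₂‖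
    have h1 : δ' * (1 + ‖p₂‖) ≤ (t / 2) * (‖p₁ - p₂‖ * d) := by
      have := mul_le_mul_of_nonneg_left hcs (by positivity : (0:ℝ) ≤ t / 2)
      linarith
    have h2 : (t / 2) * (‖p₁ - p₂‖ * d) = ‖p₁ - p₂‖ * ε / 2 := by
      rw [← htd]; ring
    have hmul : δ' * (1 - Δ^2/2) ≤ δ' * ‖p₂‖ := mul_le_mul_of_nonneg_left hp₂ hδ'0
    have h3 : δ' * (4 - Δ^2) ≤ ‖p₁ - p₂‖ * ε := by nlinarith [h1, h2, hmul]
    have h4 : (0:ℝ) < 4 - Δ^2 := by nlinarith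
    rw [le_div_iff₀ h4]
    linarith
  have hmc : modConv A ε ≤ ‖p₁ - p₂‖ * ε / (4 - Δ^2) := csSup_le hSne key
  have hmc0 : 0 < modConv A ε := huc ε hε0 hεd
  have h4 : (0:ℝ) < 4 - Δ^2 := by nlinarith
  rw [lt_div_iff₀ hε0] at hpp
  rw [le_div_iff₀ h4] at hmc
  nlinarith
end

section
/- Let A ⊂ ℝⁿ be a compact convex set and let δ : [0, diam A) → [0,∞) be such that for all y₁, y₂ ∈ A with ‖y₁ − y₂‖ < diam A, the closed ball of radius δ(‖y₁−y₂‖) centered at (y₁+y₂)/2 is contained in A. Let Δ ∈ (0,1/2), let p₁, p₂ ∈ ℝⁿ with ‖p₁‖ = 1 and 1 − Δ²/2 ≤ ‖p₂‖ ≤ 1, and let x₁, x₂ ∈ A be points with ⟨p₁, x₁⟩ = s(p₁, A) and ⟨p₂, x₂⟩ = s(p₂, A) such that ‖x₁ − x₂‖ < diam A. Then ⟨p₁ − p₂, x₁ − x₂⟩ ≥ (4 − Δ²)·δ(‖x₁ − x₂‖). -/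
open Set Metric Pointwise

lemma le_suppF_aux {n : ℕ} {A : Set (EuclideanSpace ℝ (Fin n))} (hA : IsCompact A)
    (p : EuclideanSpace ℝ (Fin n)) {y : EuclideanSpace ℝ (Fin n)} (hy : y ∈ A) :
    (inner ℝ p y : ℝ) ≤ suppF p A :=
  le_csSup ((hA.image (continuous_const.inner continuous_id)).bddAbove) ⟨y, hy, rfl⟩

lemma aux_inner_ge {n : ℕ} {A : Set (EuclideanSpace ℝ (Fin n))} (hA : IsCompact A)
    {p x : EuclideanSpace ℝ (Fin n)} (hpos : 0 < ‖p‖)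
    (hx : (inner ℝ p x : ℝ) = suppF p A)
    {m : EuclideanSpace ℝ (Fin n)} {r : ℝ} (hr : 0 ≤ r)
    (hball : Metric.closedBall m r ⊆ A) :
    r * ‖p‖ ≤ (inner ℝ p (x - m) : ℝ) := by
  have hy : m + (r * ‖p‖⁻¹) • p ∈ A := by
    apply hball
    simp only [Metric.mem_closedBall, dist_eq_norm, add_sub_cancel_left, norm_smul,
      Real.norm_eq_abs, abs_of_nonneg (mul_nonneg hr (inv_nonneg.2 hpos.le))]
    rw [mul_assoc, inv_mul_cancel₀ hpos.ne', mul_one]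
  have h := le_suppF_aux hA p hy
  rw [← hx, inner_add_right, real_inner_smul_right, real_inner_self_eq_norm_sq] at h
  rw [inner_sub_right]
  have : r * ‖p‖⁻¹ * ‖p‖ ^ 2 = r * ‖p‖ := by
    field_simp
  nlinarith [h]

/-- the key inner-product inequality behind Lemma 2.3. -/
theorem inner_diff_ge_of_midpoint_balls
    (n : ℕ) (A : Set (EuclideanSpace ℝ (Fin n)))
    (hA : IsCompact A) (hconv : Convex ℝ A)
    (δ : ℝ → ℝ) (hδ0 : ∀ t, 0 ≤ δ t)
    (hδ : ∀ y₁ ∈ A, ∀ y₂ ∈ A, ‖y₁ - y₂‖ < Metric.diam A →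
      Metric.closedBall (midpoint ℝ y₁ y₂) (δ ‖y₁ - y₂‖) ⊆ A)
    (Δ : ℝ) (hΔ : Δ ∈ Set.Ioo (0 : ℝ) (1/2))
    (p₁ p₂ x₁ x₂ : EuclideanSpace ℝ (Fin n))
    (hp₁ : ‖p₁‖ = 1) (hp₂ : 1 - Δ^2 / 2 ≤ ‖p₂‖) (hp₂' : ‖p₂‖ ≤ 1)
    (hx₁ : x₁ ∈ A) (hx₂ : x₂ ∈ A)
    (hs₁ : (inner ℝ p₁ x₁ : ℝ) = suppF p₁ A) (hs₂ : (inner ℝ p₂ x₂ : ℝ) = suppF p₂ A)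
    (hxd : ‖x₁ - x₂‖ < Metric.diam A) :
    (inner ℝ (p₁ - p₂) (x₁ - x₂) : ℝ) ≥ (4 - Δ^2) * δ ‖x₁ - x₂‖ := by
  set t : ℝ := ‖x₁ - x₂‖ with ht
  set m := midpoint ℝ x₁ x₂ with hm
  have hball : Metric.closedBall m (δ t) ⊆ A := hδ x₁ hx₁ x₂ hx₂ hxd
  have hp₂pos : 0 < ‖p₂‖ := by nlinarith [hΔ.1, hΔ.2]
  have h1 : δ t * ‖p₁‖ ≤ (inner ℝ p₁ (x₁ - m) : ℝ) :=
    aux_inner_ge hA (by rw [hp₁]; norm_num) hs₁ (hδ0 t) hball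
  have hball' : Metric.closedBall (midpoint ℝ x₂ x₁) (δ ‖x₂ - x₁‖) ⊆ A :=
    hδ x₂ hx₂ x₁ hx₁ (by rwa [norm_sub_rev])
  rw [norm_sub_rev, midpoint_comm] at hball'
  have h2 : δ t * ‖p₂‖ ≤ (inner ℝ p₂ (x₂ - m) : ℝ) :=
    aux_inner_ge hA hp₂pos hs₂ (hδ0 t) hball'
  have hm1 : (inner ℝ p₁ (x₁ - m) : ℝ) = (inner ℝ p₁ (x₁ - x₂) : ℝ) / 2 := by
    rw [hm, midpoint_eq_smul_add, inner_sub_right, inner_sub_right, inner_smul_right,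
      inner_add_right]
    rw [invOf_eq_inv]
    ring
  have hm2 : (inner ℝ p₂ (x₂ - m) : ℝ) = -(inner ℝ p₂ (x₁ - x₂) : ℝ) / 2 := by
    rw [hm, midpoint_eq_smul_add, inner_sub_right, inner_sub_right, inner_smul_right,
      inner_add_right]
    rw [invOf_eq_inv]
    ring
  rw [inner_sub_left]
  rw [hm1] at h1
  rw [hm2] at h2
  have hδt : 0 ≤ δ t := hδ0 t
  rw [hp₁] at h1
  nlinarith [mul_le_mul_of_nonneg_left hp₂ hδt]
end

section
/- Let A ⊂ ℝⁿ be a compact uniformly convex set with modulus of convexity δ_A, let Δ ∈ (0,1/2), and suppose ε_Δ ∈ (0, diam A) satisfies δ_A(ε_Δ)/ε_Δ = Δ/(4 − Δ²). Let p₁, p₂ ∈ ℝⁿ with ‖p₁‖ = 1 and 1 − Δ²/2 ≤ ‖p₂‖ ≤ 1, and let x₁, x₂ ∈ A be points with ⟨p₁, x₁⟩ = s(p₁, A) and ⟨p₂, x₂⟩ = s(p₂, A). If ‖p₁ − p₂‖ < Δ, then ‖x₁ − x₂‖ < ε_Δ. -/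
open Set Metric Pointwise

lemma inner_le_suppF {n : ℕ} {p z : EuclideanSpace ℝ (Fin n)}
    {A : Set (EuclideanSpace ℝ (Fin n))} (hA : IsCompact A) (hz : z ∈ A) :
    (inner ℝ p z : ℝ) ≤ suppF p A := by
  have hc : Continuous fun x : EuclideanSpace ℝ (Fin n) => (inner ℝ p x : ℝ) :=
    Continuous.inner continuous_const continuous_id
  exact le_csSup (hA.image hc).bddAbove ⟨z, hz, rfl⟩

lemma modConv_ball {n : ℕ} {A : Set (EuclideanSpace ℝ (Fin n))}
    (hA : IsCompact A) (hconv : Convex ℝ A) {ε : ℝ}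
    {w : EuclideanSpace ℝ (Fin n)} (hw : ‖w‖ = 1)
    {y₁ y₂ : EuclideanSpace ℝ (Fin n)} (hy₁ : y₁ ∈ A) (hy₂ : y₂ ∈ A)
    (hd : ‖y₁ - y₂‖ = ε) :
    Metric.closedBall (midpoint ℝ y₁ y₂) (modConv A ε) ⊆ A := by
  set V : Set ℝ := {δ : ℝ | 0 ≤ δ ∧ ∀ x₁ ∈ A, ∀ x₂ ∈ A, ‖x₁ - x₂‖ = ε →
    Metric.closedBall (midpoint ℝ x₁ x₂) δ ⊆ A} with hV
  have h0 : (0 : ℝ) ∈ V := by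
    refine ⟨le_refl 0, fun a ha b hb _ => ?_⟩
    rw [Metric.closedBall_zero]
    exact Set.singleton_subset_iff.2
      (hconv.segment_subset ha hb (midpoint_mem_segment a b))
  have hVne : V.Nonempty := ⟨0, h0⟩
  have hbdd : BddAbove V := by
    refine ⟨Metric.diam A, fun δ hδ => ?_⟩
    have hb1 : midpoint ℝ y₁ y₂ + δ • w ∈ A := by
      apply hδ.2 y₁ hy₁ y₂ hy₂ hd
      simp [Metric.mem_closedBall, dist_eq_norm, norm_smul, hw, abs_of_nonneg hδ.1]
    have hb2 : midpoint ℝ y₁ y₂ ∈ A :=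
      hδ.2 y₁ hy₁ y₂ hy₂ hd (by simp [Metric.mem_closedBall, hδ.1])
    have := Metric.dist_le_diam_of_mem hA.isBounded hb1 hb2
    rwa [dist_eq_norm, add_sub_cancel_left, norm_smul, hw, mul_one,
      Real.norm_eq_abs, abs_of_nonneg hδ.1] at this
  have hmc : modConv A ε = sSup V := rfl
  have hnn : 0 ≤ modConv A ε := by rw [hmc]; exact le_csSup hbdd h0
  rcases eq_or_lt_of_le hnn with hz | hpos
  · rw [← hz, Metric.closedBall_zero]
    exact Set.singleton_subset_iff.2
      (hconv.segment_subset hy₁ hy₂ (midpoint_mem_segment y₁ y₂))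
  · have hball : Metric.ball (midpoint ℝ y₁ y₂) (modConv A ε) ⊆ A := by
      intro z hz
      rw [Metric.mem_ball, hmc] at hz
      obtain ⟨δ, hδV, hlt⟩ := exists_lt_of_lt_csSup hVne hz
      exact hδV.2 y₁ hy₁ y₂ hy₂ hd (Metric.mem_closedBall.2 hlt.le)
    calc Metric.closedBall (midpoint ℝ y₁ y₂) (modConv A ε)
        = closure (Metric.ball (midpoint ℝ y₁ y₂) (modConv A ε)) :=
          (closure_ball _ (ne_of_gt hpos)).symm
      _ ⊆ closure A := closure_mono hball
      _ = A := hA.isClosed.closure_eq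


set_option maxHeartbeats 1000000 in
/-- Corollary 2.4: if `‖p₁ - p₂‖ < Δ` then the corresponding maximizers
are within `ε(Δ)` where `ε(Δ)` solves `δ_A(ε)/ε = Δ/(4 - Δ²)`. -/
theorem maximizers_close_of_step_close
    (n : ℕ) (A : Set (EuclideanSpace ℝ (Fin n)))
    (hA : IsCompact A) (hconv : Convex ℝ A) (huc : UnifConvex A)
    (Δ εΔ : ℝ) (hΔ : Δ ∈ Set.Ioo (0 : ℝ) (1/2))
    (hεΔ : εΔ ∈ Set.Ioo 0 (Metric.diam A))
    (heq : modConv A εΔ / εΔ = Δ / (4 - Δ^2))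
    (p₁ p₂ x₁ x₂ : EuclideanSpace ℝ (Fin n))
    (hp₁ : ‖p₁‖ = 1) (hp₂ : 1 - Δ^2 / 2 ≤ ‖p₂‖) (hp₂' : ‖p₂‖ ≤ 1)
    (hx₁ : x₁ ∈ A) (hx₂ : x₂ ∈ A)
    (hs₁ : (inner ℝ p₁ x₁ : ℝ) = suppF p₁ A) (hs₂ : (inner ℝ p₂ x₂ : ℝ) = suppF p₂ A)
    (hpp : ‖p₁ - p₂‖ < Δ) :
    ‖x₁ - x₂‖ < εΔ := by
  obtain ⟨hΔ0, hΔhalf⟩ := hΔ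
  obtain ⟨hεΔ0, hεΔdiam⟩ := hεΔ
  by_contra hcon
  push_neg at hcon
  set ε : ℝ := ‖x₁ - x₂‖ with hε
  have hε0 : 0 < ε := lt_of_lt_of_le hεΔ0 hcon
  set t : ℝ := εΔ / (2 * ε) with ht
  have ht0 : 0 < t := div_pos hεΔ0 (by linarith)
  have htmul : 2 * t * ε = εΔ := by rw [ht]; field_simp
  have h2t1 : 2 * t ≤ 1 := by nlinarith
  have h2t0 : 0 ≤ 2 * t := by linarith
  set δ' : ℝ := modConv A εΔ with hδ'
  -- key products and facts
  have h4Δ : (0:ℝ) < 4 - Δ^2 := by nlinarith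
  have hδ'eq : δ' * (4 - Δ^2) = Δ * εΔ := by
    field_simp at heq; linarith
  have hp₂pos : (0:ℝ) < ‖p₂‖ := by nlinarith
  set u : EuclideanSpace ℝ (Fin n) := x₂ - x₁ with hu
  have hnu : ‖u‖ = ε := by rw [hu, norm_sub_rev]
  -- first pair: x₁ and x₁ + (2t) • u
  have hy₂A : x₁ + (2*t) • (x₂ - x₁) ∈ A :=
    hconv.add_smul_sub_mem hx₁ hx₂ ⟨h2t0, h2t1⟩
  have hd₁ : ‖x₁ - (x₁ + (2*t) • u)‖ = εΔ := by
    have : x₁ - (x₁ + (2*t) • u) = (-(2*t)) • u := by module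
    rw [this, norm_smul, hnu, Real.norm_eq_abs, abs_of_nonpos (by linarith)]
    linarith
  have hm₁ : midpoint ℝ x₁ (x₁ + (2*t) • u) = x₁ + t • u := by
    rw [midpoint_eq_smul_add]
    have h2 : ((⅟ 2 : ℝ)) = (1/2 : ℝ) := by norm_num
    rw [h2]; module
  have hball₁ := modConv_ball hA hconv hp₁ hx₁ hy₂A hd₁
  rw [hm₁] at hball₁
  have hz₁ : x₁ + t • u + δ' • p₁ ∈ A := by
    apply hball₁
    have hδ'nn : 0 ≤ δ' := by nlinarith
    simp [Metric.mem_closedBall, dist_eq_norm, add_sub_cancel_left, norm_smul, hp₁,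
      Real.norm_eq_abs, abs_of_nonneg hδ'nn]
    exact hδ'.le
  -- second pair: x₂ and x₂ + (2t) • (-u)
  have hy₁A : x₂ + (2*t) • (x₁ - x₂) ∈ A :=
    hconv.add_smul_sub_mem hx₂ hx₁ ⟨h2t0, h2t1⟩
  have hd₂ : ‖x₂ - (x₂ + (2*t) • (x₁ - x₂))‖ = εΔ := by
    have : x₂ - (x₂ + (2*t) • (x₁ - x₂)) = (2*t) • u := by rw [hu]; module
    rw [this, norm_smul, hnu, Real.norm_eq_abs, abs_of_nonneg h2t0]
    linarith
  have hm₂ : midpoint ℝ x₂ (x₂ + (2*t) • (x₁ - x₂)) = x₂ - t • u := by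
    rw [midpoint_eq_smul_add]
    have h2 : ((⅟ 2 : ℝ)) = (1/2 : ℝ) := by norm_num
    rw [h2, hu]; module
  set q₂ : EuclideanSpace ℝ (Fin n) := ‖p₂‖⁻¹ • p₂ with hq₂
  have hq₂n : ‖q₂‖ = 1 := by
    rw [hq₂, norm_smul, Real.norm_eq_abs, abs_of_nonneg (inv_nonneg.2 hp₂pos.le)]
    field_simp
  have hball₂ := modConv_ball hA hconv hq₂n hx₂ hy₁A hd₂
  rw [hm₂] at hball₂
  have hδ'nn : 0 ≤ δ' := by nlinarith
  have hz₂ : x₂ - t • u + δ' • q₂ ∈ A := by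
    apply hball₂
    simp [Metric.mem_closedBall, dist_eq_norm, add_sub_cancel_left, norm_smul, hq₂n,
      Real.norm_eq_abs, abs_of_nonneg hδ'nn]
    exact hδ'.le
  -- inequalities from maximality
  have hI₁ : (inner ℝ p₁ (x₁ + t • u + δ' • p₁) : ℝ) ≤ inner ℝ p₁ x₁ := by
    rw [hs₁]; exact inner_le_suppF hA hz₁
  have hI₂ : (inner ℝ p₂ (x₂ - t • u + δ' • q₂) : ℝ) ≤ inner ℝ p₂ x₂ := by
    rw [hs₂]; exact inner_le_suppF hA hz₂
  have e₁ : (inner ℝ p₁ (x₁ + t • u + δ' • p₁) : ℝ)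
      = inner ℝ p₁ x₁ + t * inner ℝ p₁ u + δ' := by
    rw [inner_add_right, inner_add_right, real_inner_smul_right, real_inner_smul_right,
      real_inner_self_eq_norm_sq, hp₁]
    ring
  have e₂ : (inner ℝ p₂ (x₂ - t • u + δ' • q₂) : ℝ)
      = inner ℝ p₂ x₂ - t * inner ℝ p₂ u + δ' * ‖p₂‖ := by
    rw [inner_add_right, inner_sub_right, real_inner_smul_right, hq₂,
      real_inner_smul_right, real_inner_smul_right, real_inner_self_eq_norm_sq,
      pow_two, inv_mul_cancel_left₀ (ne_of_gt hp₂pos)]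
  rw [e₁] at hI₁
  rw [e₂] at hI₂
  -- Cauchy-Schwarz on p₁ - p₂ , -u
  have hCS : (inner ℝ (p₁ - p₂) (-u) : ℝ) ≤ ‖p₁ - p₂‖ * ε := by
    have := real_inner_le_norm (p₁ - p₂) (-u)
    rwa [norm_neg, hnu] at this
  have hCSe : (inner ℝ (p₁ - p₂) (-u) : ℝ) = - inner ℝ p₁ u + inner ℝ p₂ u := by
    rw [inner_neg_right, inner_sub_left]; ring
  -- combine
  have hcomb : δ' * (1 + ‖p₂‖) ≤ t * (‖p₁ - p₂‖ * ε) := by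
    have h1 : t * (inner ℝ p₁ u : ℝ) ≤ -δ' := by linarith
    have h2 : - (t * (inner ℝ p₂ u : ℝ)) ≤ -(δ' * ‖p₂‖) := by linarith
    have h3 : (inner ℝ (p₁ - p₂) (-u) : ℝ) ≤ ‖p₁ - p₂‖ * ε := hCS
    nlinarith [mul_le_mul_of_nonneg_left h3 ht0.le]
  have htε : t * ε = εΔ / 2 := by linarith
  have hlt : δ' * (1 + ‖p₂‖) < Δ * εΔ / 2 := by
    have : t * (‖p₁ - p₂‖ * ε) = ‖p₁ - p₂‖ * (t * ε) := by ring
    rw [this, htε] at hcomb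
    have hεΔ2 : (0:ℝ) < εΔ / 2 := by linarith
    nlinarith
  nlinarith [hp₂, hδ'nn, hδ'eq, hlt]
end

section
/- Let A ⊂ ℝⁿ be a compact uniformly convex set with modulus of convexity δ_A, let Δ ∈ (0,1/2), and suppose ε_Δ ∈ (0, diam A) satisfies δ_A(ε_Δ)/ε_Δ = Δ/(4 − Δ²). Let p₁, p₂ ∈ ℝⁿ with ‖p₁‖ = 1, 1 − Δ²/2 ≤ ‖p₂‖ ≤ 1, and ‖p₁ − p₂‖ < Δ, and let x₁, x₂ ∈ A be points with ⟨p₁, x₁⟩ = s(p₁, A) and ⟨p₂, x₂⟩ = s(p₂, A). Then |s(p₁,A) − s(p₂,A) − ⟨x₂, p₁ − p₂⟩| ≤ ε_Δ·Δ and |s(p₂,A) − s(p₁,A) − ⟨x₁, p₂ − p₁⟩| ≤ ε_Δ·Δ. -/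
open Set Metric Pointwise

lemma key_ball {n : ℕ} {A : Set (EuclideanSpace ℝ (Fin n))}
    (hconv : Convex ℝ A) (hcl : IsClosed A)
    {x₁ x₂ : EuclideanSpace ℝ (Fin n)} (hx₁ : x₁ ∈ A) (hx₂ : x₂ ∈ A)
    {εΔ δ' : ℝ} (hε : 0 < εΔ) (hεle : εΔ ≤ ‖x₁ - x₂‖) (hδ0 : 0 ≤ δ')
    (hadm : ∀ y₁ ∈ A, ∀ y₂ ∈ A, ‖y₁ - y₂‖ = εΔ →
      Metric.closedBall (midpoint ℝ y₁ y₂) δ' ⊆ A)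
    (v : EuclideanSpace ℝ (Fin n)) (hv : ‖v‖ ≤ 1) :
    midpoint ℝ x₁ x₂ + (δ' * ‖x₁ - x₂‖ / εΔ) • v ∈ A := by
  set ε : ℝ := ‖x₁ - x₂‖ with hεdef
  have hε0 : 0 < ε := lt_of_lt_of_le hε hεle
  set t : ℝ := 1 - εΔ / ε with htdef
  have ht0 : 0 ≤ t := by
    have : εΔ / ε ≤ 1 := (div_le_one hε0).mpr hεle
    rw [htdef]; linarith
  have ht1 : t < 1 := by
    have : 0 < εΔ / ε := div_pos hε hε0
    rw [htdef]; linarith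
  set H : ℝ := δ' * ε / εΔ with hHdef
  have hδH : δ' = H * (1 - t) := by
    rw [hHdef, htdef, sub_sub_cancel]
    field_simp
  have main : ∀ k : ℕ, midpoint ℝ x₁ x₂ + (H * (1 - t ^ k)) • v ∈ A := by
    intro k
    induction k with
    | zero =>
      simp only [pow_zero, sub_self, mul_zero, zero_smul, add_zero]
      exact hconv.segment_subset hx₁ hx₂ (midpoint_mem_segment x₁ x₂)
    | succ k ih =>
      set m : EuclideanSpace ℝ (Fin n) := midpoint ℝ x₁ x₂ with hm
      set w : EuclideanSpace ℝ (Fin n) := m + (H * (1 - t ^ k)) • v with hw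
      have hz₁ : (1 - t) • x₁ + t • w ∈ A := hconv hx₁ ih (by linarith) ht0 (by ring)
      have hz₂ : (1 - t) • x₂ + t • w ∈ A := hconv hx₂ ih (by linarith) ht0 (by ring)
      have hdist : ‖((1 - t) • x₁ + t • w) - ((1 - t) • x₂ + t • w)‖ = εΔ := by
        have : ((1 - t) • x₁ + t • w) - ((1 - t) • x₂ + t • w) = (1 - t) • (x₁ - x₂) := by
          module
        rw [this, norm_smul, Real.norm_eq_abs, abs_of_nonneg (by linarith)]
        rw [← hεdef, htdef]
        field_simp
        ring
      have hmid : midpoint ℝ ((1 - t) • x₁ + t • w) ((1 - t) • x₂ + t • w)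
          = m + (t * (H * (1 - t ^ k))) • v := by
        rw [hw, hm, midpoint_eq_smul_add, midpoint_eq_smul_add]
        simp only [invOf_eq_inv]
        module
      have hmem := hadm _ hz₁ _ hz₂ hdist
      have : m + (H * (1 - t ^ (k + 1))) • v ∈
          Metric.closedBall (midpoint ℝ ((1 - t) • x₁ + t • w) ((1 - t) • x₂ + t • w)) δ' := by
        rw [hmid, Metric.mem_closedBall, dist_eq_norm]
        have heq2 : (m + (H * (1 - t ^ (k + 1))) • v) - (m + (t * (H * (1 - t ^ k))) • v)
            = (H * (1 - t ^ (k + 1)) - t * (H * (1 - t ^ k))) • v := by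
          module
        rw [heq2, norm_smul, Real.norm_eq_abs]
        have hco : H * (1 - t ^ (k + 1)) - t * (H * (1 - t ^ k)) = δ' := by
          rw [hδH]; ring
        rw [hco, abs_of_nonneg hδ0]
        calc δ' * ‖v‖ ≤ δ' * 1 := by nlinarith
        _ = δ' := by ring
      exact hmem this
  have hlim : Filter.Tendsto (fun k : ℕ => midpoint ℝ x₁ x₂ + (H * (1 - t ^ k)) • v)
      Filter.atTop (nhds (midpoint ℝ x₁ x₂ + H • v)) := by
    have h1 : Filter.Tendsto (fun k : ℕ => t ^ k) Filter.atTop (nhds 0) :=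
      tendsto_pow_atTop_nhds_zero_of_lt_one ht0 ht1
    have h2 : Filter.Tendsto (fun k : ℕ => H * (1 - t ^ k)) Filter.atTop (nhds H) := by
      have h0 : Filter.Tendsto (fun k : ℕ => (1:ℝ) - t ^ k) Filter.atTop (nhds (1 - 0)) :=
        Filter.Tendsto.sub tendsto_const_nhds h1
      have := h0.const_mul H
      simpa using this
    exact tendsto_const_nhds.add (h2.smul_const v)
  exact hcl.mem_of_tendsto hlim (Filter.Eventually.of_forall main)

set_option maxHeartbeats 1600000 in
/-- Theorem 2.5: first-order expansion of the supporting function,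
with error at most `ε(Δ)·Δ`. -/
theorem suppF_first_order_expansion
    (n : ℕ) (A : Set (EuclideanSpace ℝ (Fin n)))
    (hA : IsCompact A) (hconv : Convex ℝ A) (huc : UnifConvex A)
    (Δ εΔ : ℝ) (hΔ : Δ ∈ Set.Ioo (0 : ℝ) (1/2))
    (hεΔ : εΔ ∈ Set.Ioo 0 (Metric.diam A))
    (heq : modConv A εΔ / εΔ = Δ / (4 - Δ^2))
    (p₁ p₂ x₁ x₂ : EuclideanSpace ℝ (Fin n))
    (hp₁ : ‖p₁‖ = 1) (hp₂ : 1 - Δ^2 / 2 ≤ ‖p₂‖) (hp₂' : ‖p₂‖ ≤ 1)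
    (hpp : ‖p₁ - p₂‖ < Δ)
    (hx₁ : x₁ ∈ A) (hx₂ : x₂ ∈ A)
    (hs₁ : (inner ℝ p₁ x₁ : ℝ) = suppF p₁ A) (hs₂ : (inner ℝ p₂ x₂ : ℝ) = suppF p₂ A) :
    |suppF p₁ A - suppF p₂ A - (inner ℝ x₂ (p₁ - p₂) : ℝ)| ≤ εΔ * Δ ∧
    |suppF p₂ A - suppF p₁ A - (inner ℝ x₁ (p₂ - p₁) : ℝ)| ≤ εΔ * Δ := by
  obtain ⟨hΔ0, hΔhalf⟩ := hΔ
  obtain ⟨hεΔ0, hεΔdiam⟩ := hεΔ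
  -- basic support facts
  have hle : ∀ p : EuclideanSpace ℝ (Fin n), ∀ y ∈ A, (inner ℝ p y : ℝ) ≤ suppF p A := by
    intro p y hy
    have hcont : Continuous (fun x : EuclideanSpace ℝ (Fin n) => (inner ℝ p x : ℝ)) :=
      Continuous.inner continuous_const continuous_id
    exact le_csSup (hA.bddAbove_image hcont.continuousOn) (Set.mem_image_of_mem _ hy)
  set a : ℝ := (inner ℝ p₁ x₁ : ℝ) - (inner ℝ p₁ x₂ : ℝ) with hadef
  clear_value a
  set b : ℝ := (inner ℝ p₂ x₂ : ℝ) - (inner ℝ p₂ x₁ : ℝ) with hbdef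
  clear_value b
  have ha0 : 0 ≤ a := by
    have := hle p₁ x₂ hx₂
    rw [← hs₁] at this
    rw [hadef]; linarith
  have hb0 : 0 ≤ b := by
    have := hle p₂ x₁ hx₁
    rw [← hs₂] at this
    rw [hbdef]; linarith
  set ε : ℝ := ‖x₁ - x₂‖ with hεdef
  clear_value ε
  have hε0 : 0 ≤ ε := by rw [hεdef]; exact norm_nonneg _
  have hab : a + b ≤ ‖p₁ - p₂‖ * ε := by
    have h1 : a + b = (inner ℝ (p₁ - p₂) (x₁ - x₂) : ℝ) := by
      rw [hadef, hbdef]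
      simp only [inner_sub_left, inner_sub_right]
      ring
    rw [h1, hεdef]
    exact real_inner_le_norm _ _
  set N : ℝ := ‖p₂‖ with hNdef
  clear_value N
  have hN0 : 0 < N := by nlinarith [hp₂]
  -- cross-multiplied form of heq
  have h4Δ : (0:ℝ) < 4 - Δ^2 := by nlinarith
  have hδΔpos : 0 < modConv A εΔ := huc εΔ hεΔ0 hεΔdiam
  have hcross : modConv A εΔ * (4 - Δ^2) = Δ * εΔ := by
    rw [div_eq_div_iff hεΔ0.ne' h4Δ.ne'] at heq
    linarith
  -- main claim : ε ≤ εΔ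
  have hεle : ε ≤ εΔ := by
    by_contra hcon
    push_neg at hcon
    have hεpos : 0 < ε := lt_trans hεΔ0 hcon
    set S : Set ℝ := {δ : ℝ | 0 ≤ δ ∧ ∀ y₁ ∈ A, ∀ y₂ ∈ A, ‖y₁ - y₂‖ = εΔ →
      Metric.closedBall (midpoint ℝ y₁ y₂) δ ⊆ A} with hSdef
    have hS0 : (0:ℝ) ∈ S := by
      refine ⟨le_refl 0, fun y₁ hy₁ y₂ hy₂ _ => ?_⟩
      rw [Metric.closedBall_zero]
      exact Set.singleton_subset_iff.mpr
        (hconv.segment_subset hy₁ hy₂ (midpoint_mem_segment y₁ y₂))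
    have hmodS : modConv A εΔ = sSup S := rfl
    have hm1 : (inner ℝ p₁ (midpoint ℝ x₁ x₂) : ℝ)
        = ((inner ℝ p₁ x₁ : ℝ) + (inner ℝ p₁ x₂ : ℝ)) / 2 := by
      rw [midpoint_eq_smul_add]
      simp only [invOf_eq_inv, inner_smul_right, inner_add_right]
      ring
    have hm2 : (inner ℝ p₂ (midpoint ℝ x₁ x₂) : ℝ)
        = ((inner ℝ p₂ x₁ : ℝ) + (inner ℝ p₂ x₂ : ℝ)) / 2 := by
      rw [midpoint_eq_smul_add]
      simp only [invOf_eq_inv, inner_smul_right, inner_add_right]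
      ring
    have hperδ : ∀ δ' ∈ S, δ' ≤ ((a + b) / 2) * εΔ / (ε * (1 + N)) := by
      intro δ' hδ'
      obtain ⟨hδ'0, hadm⟩ := hδ'
      have hεle' : εΔ ≤ ‖x₁ - x₂‖ := by rw [← hεdef]; exact hcon.le
      -- direction p₁
      have hA1 := key_ball hconv hA.isClosed hx₁ hx₂ hεΔ0 hεle' hδ'0 hadm p₁ hp₁.le
      rw [← hεdef] at hA1
      have hle1 := hle p₁ _ hA1
      rw [← hs₁] at hle1
      have hi1 : (inner ℝ p₁ (midpoint ℝ x₁ x₂ + (δ' * ε / εΔ) • p₁) : ℝ)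
          = (inner ℝ p₁ (midpoint ℝ x₁ x₂) : ℝ) + δ' * ε / εΔ := by
        rw [inner_add_right, real_inner_smul_right, real_inner_self_eq_norm_mul_norm, hp₁]
        ring
      rw [hi1, hm1] at hle1
      have hc1 : δ' * ε / εΔ ≤ a / 2 := by rw [hadef]; linarith
      -- direction p₂ / ‖p₂‖
      have hvnorm : ‖(N⁻¹ • p₂ : EuclideanSpace ℝ (Fin n))‖ ≤ 1 := by
        rw [norm_smul, Real.norm_eq_abs, abs_of_nonneg (inv_nonneg.mpr hN0.le), ← hNdef]
        rw [inv_mul_cancel₀ hN0.ne']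
      have hA2 := key_ball hconv hA.isClosed hx₁ hx₂ hεΔ0 hεle' hδ'0 hadm (N⁻¹ • p₂) hvnorm
      rw [← hεdef] at hA2
      have hle2 := hle p₂ _ hA2
      rw [← hs₂] at hle2
      have hi2 : (inner ℝ p₂ (midpoint ℝ x₁ x₂ + (δ' * ε / εΔ) • N⁻¹ • p₂) : ℝ)
          = (inner ℝ p₂ (midpoint ℝ x₁ x₂) : ℝ) + (δ' * ε / εΔ) * N := by
        rw [inner_add_right, real_inner_smul_right, real_inner_smul_right,
          real_inner_self_eq_norm_mul_norm, ← hNdef]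
        field_simp
      rw [hi2, hm2] at hle2
      have hc2 : (δ' * ε / εΔ) * N ≤ b / 2 := by rw [hbdef]; linarith
      -- combine
      have hsum : (δ' * ε / εΔ) * (1 + N) ≤ (a + b) / 2 := by nlinarith [hc1, hc2]
      have hcεΔ : δ' * ε / εΔ * εΔ = δ' * ε := by field_simp
      have hpos : (0:ℝ) < ε * (1 + N) := mul_pos hεpos (by linarith)
      rw [le_div_iff₀ hpos]
      calc δ' * (ε * (1 + N)) = (δ' * ε / εΔ * εΔ) * (1 + N) := by rw [hcεΔ]; ring
      _ = ((δ' * ε / εΔ) * (1 + N)) * εΔ := by ring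
      _ ≤ ((a + b) / 2) * εΔ := mul_le_mul_of_nonneg_right hsum hεΔ0.le
    have hsup : modConv A εΔ ≤ ((a + b) / 2) * εΔ / (ε * (1 + N)) := by
      rw [hmodS]
      exact csSup_le ⟨0, hS0⟩ hperδ
    have hsup' : modConv A εΔ * (ε * (1 + N)) ≤ ((a + b) / 2) * εΔ := by
      have hpos : (0:ℝ) < ε * (1 + N) := mul_pos hεpos (by linarith)
      rw [← le_div_iff₀ hpos]
      exact hsup
    -- contradiction
    have habs : a + b < Δ * ε := by
      calc a + b ≤ ‖p₁ - p₂‖ * ε := hab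
      _ < Δ * ε := by
        apply mul_lt_mul_of_pos_right hpp hεpos
    have e1 : (a + b) * εΔ < Δ * ε * εΔ := by
      have := mul_lt_mul_of_pos_right habs hεΔ0
      linarith
    have hMε : (0:ℝ) < modConv A εΔ * ε := mul_pos hδΔpos hεpos
    have e3 : (1 - Δ^2/2) * (modConv A εΔ * ε) ≤ N * (modConv A εΔ * ε) :=
      mul_le_mul_of_nonneg_right hp₂ hMε.le
    have e4 : modConv A εΔ * (4 - Δ^2) * ε = Δ * εΔ * ε := by rw [hcross]
    clear hle hmodS hS0 hSdef hperδ hsup hm1 hm2 hs₁ hs₂ hεdef hNdef hadef hbdef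
    set M : ℝ := modConv A εΔ with hMdef
    clear_value M
    linarith [hsup', e1, e3, e4]
  -- finish
  have hfin : a + b ≤ εΔ * Δ := by
    have h1 : ‖p₁ - p₂‖ * ε ≤ Δ * εΔ :=
      mul_le_mul hpp.le hεle hε0 hΔ0.le
    linarith
  have hg1 : suppF p₁ A - suppF p₂ A - (inner ℝ x₂ (p₁ - p₂) : ℝ) = a := by
    rw [← hs₁, ← hs₂, hadef]
    rw [inner_sub_right, real_inner_comm x₂ p₁, real_inner_comm x₂ p₂]
    ring
  have hg2 : suppF p₂ A - suppF p₁ A - (inner ℝ x₁ (p₂ - p₁) : ℝ) = b := by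
    rw [← hs₁, ← hs₂, hbdef]
    rw [inner_sub_right, real_inner_comm x₁ p₂, real_inner_comm x₁ p₁]
    ring
  have hεΔΔ : 0 ≤ εΔ * Δ := by positivity
  constructor
  · rw [hg1, abs_le]; constructor <;> linarith
  · rw [hg2, abs_le]; constructor <;> linarith
end

section
/- Let A, B ⊂ ℝⁿ be convex compacta, let r₀ > 0, d > 0, a ∈ ℝⁿ be such that the closed ball B_{r₀}(a) ⊆ B ⊖ A ⊆ B_d(a), and let B' be a convex compact set with B ⊆ B' ⊆ B + B_h(0) for some h ≥ 0. Then B ⊖ A ⊆ B' ⊖ A ⊆ (B ⊖ A) + B_{(d/r₀)·h}(0); in particular, the Hausdorff distance satisfies h(B ⊖ A, B' ⊖ A) ≤ (d/r₀)·h. -/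
open Set Metric Pointwise

/-- stability of the geometric difference under outer enlargement of `B`. -/
theorem geomDiff_stability
    (n : ℕ) (A B B' : Set (EuclideanSpace ℝ (Fin n)))
    (hA : IsCompact A) (hAc : Convex ℝ A)
    (hB : IsCompact B) (hBc : Convex ℝ B)
    (hB' : IsCompact B') (hB'c : Convex ℝ B')
    (r₀ d h : ℝ) (hr₀ : 0 < r₀) (hd : 0 < d) (hh : 0 ≤ h)
    (a : EuclideanSpace ℝ (Fin n))
    (hball : Metric.closedBall a r₀ ⊆ geomDiff B A)
    (hdball : geomDiff B A ⊆ Metric.closedBall a d)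
    (hBB' : B ⊆ B') (hB'B : B' ⊆ B + Metric.closedBall 0 h) :
    geomDiff B A ⊆ geomDiff B' A ∧
    geomDiff B' A ⊆ geomDiff B A + Metric.closedBall 0 (d / r₀ * h) ∧
    Metric.hausdorffDist (geomDiff B A) (geomDiff B' A) ≤ d / r₀ * h := by
  classical
  have hc0 : (0:ℝ) ≤ d / r₀ * h := by positivity
  have hrh : (0:ℝ) < r₀ + h := by linarith
  set lam : ℝ := r₀ / (r₀ + h) with hlamdef
  have hlam0 : 0 < lam := by positivity
  have hlam1 : lam ≤ 1 := by
    rw [hlamdef, div_le_one hrh]; linarith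
  have hlameq : lam * h = (1 - lam) * r₀ := by
    rw [hlamdef]; field_simp; ring
  -- the key contraction step
  have key : ∀ x ∈ geomDiff B' A,
      lam • x + (1 - lam) • a ∈ geomDiff B A ∧
      ‖x - (lam • x + (1 - lam) • a)‖ ≤ d / r₀ * h := by
    intro x hx
    have hy : lam • x + (1 - lam) • a ∈ geomDiff B A := by
      intro a' ha'
      by_contra hz
      obtain ⟨f, u, hfB, hfz⟩ :=
        geometric_hahn_banach_closed_point hBc hB.isClosed hz
      -- x + a' ∈ B + closedBall 0 h
      have hx' : x + a' ∈ B + Metric.closedBall (0 : EuclideanSpace ℝ (Fin n)) h :=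
        hB'B (hx a' ha')
      obtain ⟨b, hb, k, hk, hbk⟩ := Set.mem_add.1 hx'
      -- translate f to an inner product with a vector p
      set p := (InnerProductSpace.toDual ℝ (EuclideanSpace ℝ (Fin n))).symm f with hpdef
      have hfp : ∀ v, f v = (inner ℝ p v : ℝ) := by
        intro v
        rw [hpdef, InnerProductSpace.toDual_symm_apply]
      have hnp : ‖p‖ = ‖f‖ := by
        rw [hpdef]; exact (InnerProductSpace.toDual ℝ _).symm.norm_map f
      have hp0 : p ≠ 0 := by
        intro h0
        have h1 : f b < u := hfB b hb
        have h2 : u < f _ := hfz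
        rw [hfp, h0] at h1 h2
        simp at h1 h2
        linarith
      have hpnorm : 0 < ‖p‖ := norm_pos_iff.2 hp0
      -- the point a + (r₀/‖p‖) • p  lies in closedBall a r₀ ⊆ geomDiff B A
      have hw : a + (r₀ / ‖p‖) • p + a' ∈ B := by
        apply hball _ a' ha'
        rw [Metric.mem_closedBall, dist_eq_norm]
        have : a + (r₀ / ‖p‖) • p - a = (r₀ / ‖p‖) • p := by abel
        rw [this, norm_smul]
        rw [Real.norm_eq_abs, abs_of_pos (by positivity)]
        field_simp
        exact le_rfl
      have h3 : f a + r₀ * ‖p‖ + f a' < u := by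
        have := hfB _ hw
        have hfw : f (a + (r₀ / ‖p‖) • p + a') = f a + r₀ * ‖p‖ + f a' := by
          rw [map_add, map_add, map_smul, smul_eq_mul, hfp p,
            real_inner_self_eq_norm_sq]
          field_simp [hpnorm.ne']
        rw [hfw] at this
        exact this
      have hkb : ‖k‖ ≤ h := by
        rw [← mem_closedBall_zero_iff]; exact hk
      have hfk : f k ≤ ‖p‖ * h := by
        calc f k ≤ |f k| := le_abs_self _
          _ ≤ ‖f‖ * ‖k‖ := f.le_opNorm k
          _ ≤ ‖p‖ * h := by rw [hnp]; exact mul_le_mul le_rfl hkb (norm_nonneg _) (norm_nonneg _)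
      have h2 : f x + f a' < u + ‖p‖ * h := by
        have : f x + f a' = f b + f k := by
          rw [← map_add, ← map_add, hbk]
        rw [this]
        have := hfB b hb
        linarith
      have hz2 : u < lam * f x + (1 - lam) * f a + f a' := by
        have hfz' : f (lam • x + (1 - lam) • a + a')
            = lam * f x + (1 - lam) * f a + f a' := by
          rw [map_add, map_add, map_smul, map_smul, smul_eq_mul, smul_eq_mul]
        rw [← hfz']; exact hfz
      nlinarith [mul_le_mul_of_nonneg_left h2.le hlam0.le,
        mul_le_mul_of_nonneg_left h3.le (by linarith : (0:ℝ) ≤ 1 - lam),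
        hpnorm.le, hlameq]
    refine ⟨hy, ?_⟩
    -- distance bound
    have hyd : ‖lam • x + (1 - lam) • a - a‖ ≤ d := by
      have := hdball hy
      rwa [Metric.mem_closedBall, dist_eq_norm] at this
    have hya : lam • x + (1 - lam) • a - a = lam • (x - a) := by
      rw [smul_sub]
      module
    have hxy : x - (lam • x + (1 - lam) • a) = (1 - lam) • (x - a) := by
      rw [smul_sub]
      module
    rw [hxy, norm_smul, Real.norm_eq_abs, abs_of_nonneg (by linarith : (0:ℝ) ≤ 1 - lam)]
    rw [hya, norm_smul, Real.norm_eq_abs, abs_of_pos hlam0] at hyd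
    have hxa : ‖x - a‖ ≤ d / lam := by
      rw [le_div_iff₀ hlam0]; linarith [hyd]
    calc (1 - lam) * ‖x - a‖ ≤ (1 - lam) * (d / lam) :=
          mul_le_mul_of_nonneg_left hxa (by linarith)
      _ = d / r₀ * h := by
          rw [hlamdef]
          field_simp
          ring
  have hsub1 : geomDiff B A ⊆ geomDiff B' A := by
    intro x hx a' ha'
    exact hBB' (hx a' ha')
  have hsub2 : geomDiff B' A ⊆ geomDiff B A +
      Metric.closedBall (0 : EuclideanSpace ℝ (Fin n)) (d / r₀ * h) := by
    intro x hx
    obtain ⟨hy, hdist⟩ := key x hx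
    refine Set.mem_add.2 ⟨_, hy, x - (lam • x + (1 - lam) • a), ?_, by abel⟩
    rw [mem_closedBall_zero_iff]
    exact hdist
  refine ⟨hsub1, hsub2, ?_⟩
  apply Metric.hausdorffDist_le_of_mem_dist hc0
  · intro x hx
    exact ⟨x, hsub1 hx, by simpa using hc0⟩
  · intro x hx
    obtain ⟨hy, hdist⟩ := key x hx
    refine ⟨_, hy, ?_⟩
    rw [dist_eq_norm]
    exact hdist
end

section
/- Let A, B ⊂ ℝⁿ be convex compacta with B compact and uniformly convex with modulus of convexity δ_B, and suppose the closed ball B_{r₀}(a) ⊆ B ⊖ A ⊆ B_d(a) for some r₀ > 0, d > 0, a ∈ ℝⁿ. Let 𝒞 be a grid with step Δ ∈ (0,1/2), suppose ε_Δ ∈ (0, diam B) satisfies δ_B(ε_Δ)/ε_Δ = Δ/(4 − Δ²), and set Ã = {x ∈ ℝⁿ : ⟨p,x⟩ ≤ s(p,B) − s(p,A) for all p ∈ 𝒞}. Then h(B ⊖ A, Ã) ≤ (8d/(7r₀))·ε_Δ·Δ. -/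
open Set Metric Pointwise

section AuxLemmas

variable {n : ℕ} {p x : EuclideanSpace ℝ (Fin n)} {A B S : Set (EuclideanSpace ℝ (Fin n))}

lemma bddAbove_inner_image (hS : IsCompact S) :
    BddAbove ((fun x => (inner ℝ p x : ℝ)) '' S) :=
  (hS.image (continuous_const.inner continuous_id)).bddAbove

lemma le_suppF_s10 (hS : IsCompact S) (hx : x ∈ S) : (inner ℝ p x : ℝ) ≤ suppF p S :=
  le_csSup (bddAbove_inner_image hS) ⟨x, hx, rfl⟩

lemma suppF_le {c : ℝ} (hS : S.Nonempty) (h : ∀ y ∈ S, (inner ℝ p y : ℝ) ≤ c) :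
    suppF p S ≤ c :=
  csSup_le (hS.image _) (by rintro _ ⟨y, hy, rfl⟩; exact h y hy)

lemma suppF_smul (hS : IsCompact S) (hne : S.Nonempty) {t : ℝ} (ht : 0 < t) :
    suppF (t • p) S = t * suppF p S := by
  apply le_antisymm
  · apply suppF_le hne; intro y hy
    rw [real_inner_smul_left]
    exact mul_le_mul_of_nonneg_left (le_suppF_s10 hS hy) ht.le
  · rw [← le_inv_mul_iff₀ ht]
    apply suppF_le hne; intro y hy
    rw [le_inv_mul_iff₀ ht, ← real_inner_smul_left]
    exact le_suppF_s10 hS hy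

lemma modConv_ball_s10 (hBcl : IsClosed B) (hBc : Convex ℝ B) {ε : ℝ} (hpos : 0 < modConv B ε)
    {x₁ x₂ : EuclideanSpace ℝ (Fin n)} (h₁ : x₁ ∈ B) (h₂ : x₂ ∈ B)
    (hd : ‖x₁ - x₂‖ = ε) :
    Metric.closedBall (midpoint ℝ x₁ x₂) (modConv B ε) ⊆ B := by
  set S := {δ : ℝ | 0 ≤ δ ∧ ∀ x₁ ∈ B, ∀ x₂ ∈ B, ‖x₁ - x₂‖ = ε →
    Metric.closedBall (midpoint ℝ x₁ x₂) δ ⊆ B} with hS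
  have hSne : S.Nonempty := by
    refine ⟨0, le_refl 0, fun y₁ hy₁ y₂ hy₂ _ => ?_⟩
    rw [Metric.closedBall_zero]
    intro z hz
    rw [Set.mem_singleton_iff] at hz
    subst hz
    exact hBc.segment_subset hy₁ hy₂ (midpoint_mem_segment y₁ y₂)
  have hSbdd : BddAbove S := by
    by_contra hb
    have : modConv B ε = 0 := Real.sSup_of_not_bddAbove hb
    rw [this] at hpos; exact lt_irrefl 0 hpos
  have key : ∀ r, 0 ≤ r → r < modConv B ε →
      Metric.closedBall (midpoint ℝ x₁ x₂) r ⊆ B := by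
    intro r _ hr
    obtain ⟨δ', hδ'S, hrδ'⟩ := exists_lt_of_lt_csSup hSne hr
    exact (Metric.closedBall_subset_closedBall hrδ'.le).trans
      (hδ'S.2 x₁ h₁ x₂ h₂ hd)
  set m := midpoint ℝ x₁ x₂
  intro z hz
  have hm : m ∈ B := hBc.segment_subset h₁ h₂ (midpoint_mem_segment x₁ x₂)
  have hnb : (nhdsWithin (1:ℝ) (Set.Ioo 0 1)).NeBot := by
    rw [nhdsWithin_Ioo_eq_nhdsLT one_pos]; infer_instance
  have htd : Filter.Tendsto (fun t : ℝ => m + t • (z - m))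
      (nhdsWithin 1 (Set.Ioo 0 1)) (nhds z) := by
    have hcont : Filter.Tendsto (fun t : ℝ => m + t • (z - m)) (nhds 1) (nhds z) := by
      have hc : Continuous (fun t : ℝ => m + t • (z - m)) := by fun_prop
      have := hc.tendsto 1
      simpa using this
    exact hcont.mono_left nhdsWithin_le_nhds
  refine hBcl.mem_of_tendsto htd (Filter.eventually_of_mem self_mem_nhdsWithin ?_)
  intro t ht
  obtain ⟨ht0, ht1⟩ := ht
  apply key (t * modConv B ε) (by positivity) (by nlinarith [hpos])
  rw [Metric.mem_closedBall]
  have hdd : dist (m + t • (z - m)) m = t * dist z m := by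
    rw [dist_eq_norm, dist_eq_norm]
    simp [norm_smul, abs_of_pos ht0]
  rw [hdd]
  exact mul_le_mul_of_nonneg_left (Metric.mem_closedBall.mp hz) ht0.le

lemma supp_half (hBcl : IsClosed B) (hBc : Convex ℝ B)
    {εΔ : ℝ} (hε : 0 < εΔ) (hδpos : 0 < modConv B εΔ)
    {q x u : EuclideanSpace ℝ (Fin n)} (hq : ‖q‖ = 1) (hu : ‖u‖ = 1)
    (hx : x ∈ B) (hxu : x - εΔ • u ∈ B)
    (hmax : ∀ y ∈ B, (inner ℝ q y : ℝ) ≤ (inner ℝ q x : ℝ)) :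
    modConv B εΔ ≤ (εΔ/2) * (inner ℝ q u : ℝ) := by
  set δ := modConv B εΔ with hδdef
  have hdist : ‖x - (x - εΔ • u)‖ = εΔ := by
    rw [show x - (x - εΔ • u) = εΔ • u by abel, norm_smul, hu, Real.norm_eq_abs,
      abs_of_pos hε, mul_one]
  have hmid : midpoint ℝ x (x - εΔ • u) = x - (εΔ/2) • u := by
    rw [midpoint_eq_smul_add, invOf_eq_inv]; module
  have hz : x - (εΔ/2) • u + δ • q ∈ B := by
    apply modConv_ball_s10 hBcl hBc hδpos hx hxu hdist
    rw [hmid, Metric.mem_closedBall, dist_eq_norm]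
    rw [show x - (εΔ/2) • u + δ • q - (x - (εΔ/2) • u) = δ • q by abel]
    rw [norm_smul, hq, Real.norm_eq_abs, abs_of_pos hδpos, mul_one]
  have h := hmax _ hz
  have hqq1 : (inner ℝ q q : ℝ) = 1 := by
    rw [real_inner_self_eq_norm_sq, hq]; norm_num
  have expand : (inner ℝ q (x - (εΔ/2) • u + δ • q) : ℝ)
      = (inner ℝ q x : ℝ) - (εΔ/2) * (inner ℝ q u : ℝ) + δ := by
    rw [inner_add_right, inner_sub_right, real_inner_smul_right, real_inner_smul_right, hqq1]
    ring
  rw [expand] at h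
  linarith

lemma support_pts_close (hBcl : IsClosed B) (hBc : Convex ℝ B)
    {εΔ Δ : ℝ} (hε : 0 < εΔ) (hΔ : 0 < Δ) (hΔ1 : Δ < 1)
    (hδ : modConv B εΔ = εΔ * Δ / (4 - Δ^2))
    {q₁ q₂ x₁ x₂ : EuclideanSpace ℝ (Fin n)}
    (hq₁ : ‖q₁‖ = 1) (hq₂ : ‖q₂‖ = 1) (hqq : ‖q₁ - q₂‖ < Δ)
    (hx₁ : x₁ ∈ B) (hx₂ : x₂ ∈ B)
    (hmax₁ : ∀ y ∈ B, (inner ℝ q₁ y : ℝ) ≤ (inner ℝ q₁ x₁ : ℝ))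
    (hmax₂ : ∀ y ∈ B, (inner ℝ q₂ y : ℝ) ≤ (inner ℝ q₂ x₂ : ℝ)) :
    ‖x₁ - x₂‖ ≤ εΔ := by
  have h4Δ : (0:ℝ) < 4 - Δ^2 := by nlinarith
  have hδpos : 0 < modConv B εΔ := by rw [hδ]; positivity
  by_contra hcon
  push_neg at hcon
  have hε'pos : (0:ℝ) < ‖x₁ - x₂‖ := lt_trans hε hcon
  obtain ⟨w, hw⟩ : ∃ w : EuclideanSpace ℝ (Fin n), w = ‖x₁ - x₂‖⁻¹ • (x₁ - x₂) := ⟨_, rfl⟩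
  have hwnorm : ‖w‖ = 1 := by
    rw [hw, norm_smul, norm_inv, Real.norm_eq_abs, abs_of_pos hε'pos,
      inv_mul_cancel₀ hε'pos.ne']
  set t := εΔ / ‖x₁ - x₂‖ with ht
  have ht0 : 0 < t := by positivity
  have ht1 : t < 1 := (div_lt_one hε'pos).mpr hcon
  have hεw : εΔ • w = t • (x₁ - x₂) := by
    rw [hw, smul_smul, ht]; ring_nf
  have hy₂ : x₁ - εΔ • w ∈ B := by
    have : x₁ - εΔ • w = (1 - t) • x₁ + t • x₂ := by rw [hεw]; module
    rw [this]; exact hBc hx₁ hx₂ (by linarith) ht0.le (by ring)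
  have hy₁ : x₂ - εΔ • (-w) ∈ B := by
    have : x₂ - εΔ • (-w) = (1 - t) • x₂ + t • x₁ := by
      rw [show x₂ - εΔ • (-w) = x₂ + εΔ • w by module, hεw]; module
    rw [this]; exact hBc hx₂ hx₁ (by linarith) ht0.le (by ring)
  have h1 := supp_half hBcl hBc hε hδpos hq₁ hwnorm hx₁ hy₂ hmax₁
  have h2 := supp_half hBcl hBc hε hδpos hq₂ (by rw [norm_neg]; exact hwnorm) hx₂ hy₁ hmax₂
  have hcs : (inner ℝ (q₁ - q₂) w : ℝ) ≤ ‖q₁ - q₂‖ := by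
    calc (inner ℝ (q₁ - q₂) w : ℝ) ≤ ‖q₁ - q₂‖ * ‖w‖ := real_inner_le_norm _ _
    _ = ‖q₁ - q₂‖ := by rw [hwnorm, mul_one]
  rw [inner_sub_left] at hcs
  rw [inner_neg_right] at h2
  have hsum : 2 * modConv B εΔ ≤ (εΔ/2) * ‖q₁ - q₂‖ := by nlinarith
  rw [hδ] at hsum
  have h2e : 2*(εΔ*Δ) = (2*(εΔ*Δ/(4-Δ^2)))*(4-Δ^2) := by field_simp
  have hsum2 : 2*(εΔ*Δ) ≤ (εΔ/2*‖q₁ - q₂‖)*(4-Δ^2) := by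
    rw [h2e]; exact mul_le_mul_of_nonneg_right hsum h4Δ.le
  nlinarith [norm_nonneg (q₁ - q₂), mul_pos hε hΔ,
    mul_nonneg (mul_nonneg hε.le (norm_nonneg (q₁ - q₂))) (sq_nonneg Δ),
    mul_lt_mul_of_pos_left hqq hε]

/-- Any point of the geometric difference satisfies all the halfspace constraints. -/
lemma geomDiff_halfspace (hAne : A.Nonempty) (hB : IsCompact B)
    (hx : x ∈ geomDiff B A) (p : EuclideanSpace ℝ (Fin n)) :
    (inner ℝ p x : ℝ) ≤ suppF p B - suppF p A := by
  have h : suppF p A ≤ suppF p B - (inner ℝ p x : ℝ) := by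
    apply suppF_le hAne
    intro y hy
    have hxy : x + y ∈ B := hx y hy
    have := le_suppF_s10 (p := p) hB hxy
    rw [inner_add_right] at this
    linarith
  linarith

/-- A point satisfying all halfspace constraints (for unit vectors) is in the
geometric difference. -/
lemma mem_geomDiff_of_halfspaces (hBc : Convex ℝ B) (hBcl : IsClosed B)
    (hBne : B.Nonempty) (hB : IsCompact B) (hA : IsCompact A)
    (h : ∀ p : EuclideanSpace ℝ (Fin n), ‖p‖ = 1 →
      (inner ℝ p x : ℝ) ≤ suppF p B - suppF p A) :
    x ∈ geomDiff B A := by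
  intro y hy
  by_contra hxy
  obtain ⟨f, u, hfB, hfu⟩ := geometric_hahn_banach_closed_point hBc hBcl hxy
  set p := (InnerProductSpace.toDual ℝ (EuclideanSpace ℝ (Fin n))).symm f with hp
  have hpf : ∀ z, (inner ℝ p z : ℝ) = f z := fun z =>
    InnerProductSpace.toDual_symm_apply
  have hpne : p ≠ 0 := by
    intro h0
    obtain ⟨b, hb⟩ := hBne
    have h2 : f b = 0 := by rw [← hpf, h0]; simp
    have h3 : f (x + y) = 0 := by rw [← hpf, h0]; simp
    linarith [hfB b hb, hfu]
  have hpnorm : (0:ℝ) < ‖p‖ := norm_pos_iff.mpr hpne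
  set q : EuclideanSpace ℝ (Fin n) := ‖p‖⁻¹ • p with hq
  have hqnorm : ‖q‖ = 1 := by
    rw [hq, norm_smul, norm_inv, norm_norm, inv_mul_cancel₀ hpnorm.ne']
  have hineq := h q hqnorm
  have hAne : A.Nonempty := ⟨y, hy⟩
  have hscale : suppF p B - suppF p A = ‖p‖ * (suppF q B - suppF q A) := by
    have hpq : p = ‖p‖ • q := by rw [hq, smul_smul, mul_inv_cancel₀ hpnorm.ne', one_smul]
    rw [mul_sub]
    nth_rewrite 1 [hpq]
    nth_rewrite 2 [hpq]
    rw [suppF_smul hB hBne hpnorm, suppF_smul hA hAne hpnorm]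
  have hpx : (inner ℝ p x : ℝ) ≤ suppF p B - suppF p A := by
    have : (inner ℝ p x : ℝ) = ‖p‖ * (inner ℝ q x : ℝ) := by
      rw [hq, real_inner_smul_left]
      field_simp
    rw [this, hscale]
    exact mul_le_mul_of_nonneg_left hineq hpnorm.le
  have hyA : (inner ℝ p y : ℝ) ≤ suppF p A := le_suppF_s10 hA hy
  have hsB : suppF p B ≤ u := suppF_le hBne (fun z hz => by rw [hpf z]; exact (hfB z hz).le)
  have : (inner ℝ p (x + y) : ℝ) > u := by rw [hpf]; exact hfu
  rw [inner_add_right] at this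
  linarith

/-- Step 3: approximate halfspace inequality in every unit direction. -/
lemma grid_estimate (hA : IsCompact A) (hAne : A.Nonempty)
    (hB : IsCompact B) (hBc : Convex ℝ B) (hBne : B.Nonempty)
    {Δ εΔ : ℝ} (hΔ0 : 0 < Δ) (hΔhalf : Δ < 1/2) (hε : 0 < εΔ)
    (hδ : modConv B εΔ = εΔ * Δ / (4 - Δ^2))
    {C : Finset (EuclideanSpace ℝ (Fin n))} (hC : IsGrid C Δ)
    (hx : ∀ p ∈ C, (inner ℝ p x : ℝ) ≤ suppF p B - suppF p A)
    (p : EuclideanSpace ℝ (Fin n)) (hp : ‖p‖ = 1) :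
    (inner ℝ p x : ℝ) ≤ suppF p B - suppF p A + 8/7 * (Δ * εΔ) := by
  have hc0 : (0:ℝ) ≤ 8/7 * (Δ * εΔ) := by positivity
  by_cases hpC : p ∈ C
  · linarith [hx p hpC]
  have hpne : p ≠ 0 := fun h0 => by rw [h0, norm_zero] at hp; norm_num at hp
  obtain ⟨k, q, α, hqC, hα, hsum, hqq⟩ := hC.2 p hpne (by rw [hp, inv_one, one_smul]; exact hpC)
  have hqn : ∀ i, ‖q i‖ = 1 := fun i => hC.1 _ (hqC i)
  have hk : 0 < k := by
    rcases Nat.eq_zero_or_pos k with h0 | h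
    · exfalso; subst h0; simp at hsum; exact hpne hsum
    · exact h
  set j : Fin k := ⟨0, hk⟩
  have hex : ∀ i : Fin k, ∃ z ∈ B, ∀ y ∈ B, (inner ℝ (q i) y : ℝ) ≤ (inner ℝ (q i) z : ℝ) := by
    intro i
    obtain ⟨z, hz, hmax⟩ := hB.exists_isMaxOn hBne
      ((continuous_const.inner continuous_id).continuousOn
        (s := B) : ContinuousOn (fun y => (inner ℝ (q i) y : ℝ)) B)
    exact ⟨z, hz, fun y hy => hmax hy⟩
  choose xs hxsB hxsmax using hex
  have hsupp : ∀ i, suppF (q i) B = (inner ℝ (q i) (xs i) : ℝ) :=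
    fun i => le_antisymm (suppF_le hBne (hxsmax i)) (le_suppF_s10 hB (hxsB i))
  have hclose : ∀ i i', ‖xs i - xs i'‖ ≤ εΔ := fun i i' =>
    support_pts_close hB.isClosed hBc hε hΔ0 (by linarith) hδ (hqn i) (hqn i')
      (hqq i i') (hxsB i) (hxsB i') (hxsmax i) (hxsmax i')
  have hBsum : ∀ i, suppF (q i) B ≤ (inner ℝ (q i) (xs j) : ℝ) + Δ * εΔ := by
    intro i
    rw [hsupp i]
    have e1 : (inner ℝ (q i) (xs i) : ℝ) - (inner ℝ (q i) (xs j) : ℝ)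
        = (inner ℝ (q j) (xs i - xs j) : ℝ) + (inner ℝ (q i - q j) (xs i - xs j) : ℝ) := by
      simp only [inner_sub_left, inner_sub_right]; ring
    have e2 : (inner ℝ (q j) (xs i - xs j) : ℝ) ≤ 0 := by
      rw [inner_sub_right]
      linarith [hxsmax j (xs i) (hxsB i)]
    have e3 : (inner ℝ (q i - q j) (xs i - xs j) : ℝ) ≤ Δ * εΔ := by
      calc (inner ℝ (q i - q j) (xs i - xs j) : ℝ) ≤ ‖q i - q j‖ * ‖xs i - xs j‖ :=
            real_inner_le_norm _ _
        _ ≤ Δ * εΔ := mul_le_mul (hqq i j).le (hclose i j) (norm_nonneg _) hΔ0.le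
    linarith
  set Sα := ∑ i, α i with hSα
  have hSα0 : 0 ≤ Sα := Finset.sum_nonneg (fun i _ => (hα i).le)
  have hip : (1:ℝ) = ∑ i, ∑ i', α i * α i' * (inner ℝ (q i) (q i') : ℝ) := by
    have h1 : (1:ℝ) = (inner ℝ p p : ℝ) := by
      rw [real_inner_self_eq_norm_sq, hp]; norm_num
    rw [h1, hsum, sum_inner]
    apply Finset.sum_congr rfl
    intro i _
    rw [real_inner_smul_left, inner_sum, Finset.mul_sum]
    apply Finset.sum_congr rfl
    intro i' _
    rw [real_inner_smul_right]; ring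
  have hqq78 : ∀ i i', (7/8 : ℝ) ≤ (inner ℝ (q i) (q i') : ℝ) := by
    intro i i'
    have hn : ‖q i - q i'‖^2 = 2 - 2 * (inner ℝ (q i) (q i') : ℝ) := by
      rw [norm_sub_sq_real, hqn i, hqn i']; ring
    have h2 : ‖q i - q i'‖^2 < Δ^2 := by
      apply sq_lt_sq' _ (hqq i i')
      linarith [norm_nonneg (q i - q i'), hqq i i']
    nlinarith
  have hub : (7/8 : ℝ) * (Sα * Sα) ≤ 1 := by
    rw [hip, hSα, Finset.sum_mul_sum, Finset.mul_sum]
    apply Finset.sum_le_sum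
    intro i _
    rw [Finset.mul_sum]
    apply Finset.sum_le_sum
    intro i' _
    have := mul_le_mul_of_nonneg_left (hqq78 i i') (mul_nonneg (hα i).le (hα i').le)
    nlinarith [this]
  have hSα87 : Sα ≤ 8/7 := by nlinarith
  have hmain : (inner ℝ p x : ℝ) ≤ ∑ i, α i * (suppF (q i) B - suppF (q i) A) := by
    nth_rewrite 1 [hsum]
    rw [sum_inner]
    apply Finset.sum_le_sum
    intro i _
    rw [real_inner_smul_left]
    exact mul_le_mul_of_nonneg_left (hx _ (hqC i)) (hα i).le
  have hsplit : ∑ i, α i * (suppF (q i) B - suppF (q i) A)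
      = ∑ i, α i * suppF (q i) B - ∑ i, α i * suppF (q i) A := by
    rw [← Finset.sum_sub_distrib]
    apply Finset.sum_congr rfl
    intro i _; ring
  have hBbound : ∑ i, α i * suppF (q i) B ≤ suppF p B + Δ * εΔ * Sα := by
    have h1 : ∑ i, α i * suppF (q i) B
        ≤ ∑ i, α i * ((inner ℝ (q i) (xs j) : ℝ) + Δ * εΔ) :=
      Finset.sum_le_sum (fun i _ => mul_le_mul_of_nonneg_left (hBsum i) (hα i).le)
    have h2 : ∑ i, α i * ((inner ℝ (q i) (xs j) : ℝ) + Δ * εΔ)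
        = (inner ℝ p (xs j) : ℝ) + Δ * εΔ * Sα := by
      rw [Finset.sum_congr rfl (fun i _ => mul_add (α i) _ _), Finset.sum_add_distrib]
      congr 1
      · rw [hsum, sum_inner]
        exact Finset.sum_congr rfl (fun i _ => (real_inner_smul_left _ _ _).symm)
      · rw [← Finset.sum_mul, hSα]; ring
    have h3 : (inner ℝ p (xs j) : ℝ) ≤ suppF p B := le_suppF_s10 hB (hxsB j)
    linarith
  have hAbound : suppF p A ≤ ∑ i, α i * suppF (q i) A := by
    apply suppF_le hAne
    intro y hy
    nth_rewrite 1 [hsum]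
    rw [sum_inner]
    apply Finset.sum_le_sum
    intro i _
    rw [real_inner_smul_left]
    exact mul_le_mul_of_nonneg_left (le_suppF_s10 hA hy) (hα i).le
  have hfinal : Δ * εΔ * Sα ≤ 8/7 * (Δ * εΔ) := by
    rw [mul_comm (8/7 : ℝ) (Δ * εΔ)]
    exact mul_le_mul_of_nonneg_left hSα87 (by positivity)
  linarith

end AuxLemmas

/-- Theorem 3.1: approximation of the geometric difference via the
presupporting function `f(p) = s(p,B) - s(p,A)`. -/
theorem hausdorffDist_geomDiff_presupporting
    (n : ℕ) (A B : Set (EuclideanSpace ℝ (Fin n)))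
    (hA : IsCompact A) (hAc : Convex ℝ A)
    (hB : IsCompact B) (hBc : Convex ℝ B) (hucB : UnifConvex B)
    (r₀ d : ℝ) (hr₀ : 0 < r₀) (hd : 0 < d) (a : EuclideanSpace ℝ (Fin n))
    (hball : Metric.closedBall a r₀ ⊆ geomDiff B A)
    (hdball : geomDiff B A ⊆ Metric.closedBall a d)
    (Δ εΔ : ℝ) (hΔ : Δ ∈ Set.Ioo (0 : ℝ) (1/2))
    (hεΔ : εΔ ∈ Set.Ioo 0 (Metric.diam B))
    (heq : modConv B εΔ / εΔ = Δ / (4 - Δ^2))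
    (C : Finset (EuclideanSpace ℝ (Fin n))) (hC : IsGrid C Δ) :
    Metric.hausdorffDist (geomDiff B A)
      {x : EuclideanSpace ℝ (Fin n) | ∀ p ∈ C, (inner ℝ p x : ℝ) ≤ suppF p B - suppF p A}
      ≤ 8 * d / (7 * r₀) * εΔ * Δ := by
  obtain ⟨hΔ0, hΔhalf⟩ := hΔ
  obtain ⟨hε0, hεdiam⟩ := hεΔ
  have h4Δ : (0:ℝ) < 4 - Δ^2 := by nlinarith
  -- rewrite the modulus equation
  have hδ : modConv B εΔ = εΔ * Δ / (4 - Δ^2) := by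
    rw [div_eq_div_iff hε0.ne' h4Δ.ne'] at heq
    rw [eq_div_iff h4Δ.ne']
    linarith [heq]
  -- B is nontrivial
  have hBnt : B.Nontrivial := by
    by_contra h
    rw [Set.not_nontrivial_iff] at h
    have := Metric.diam_subsingleton h
    rw [this] at hεdiam; linarith
  have hBne : B.Nonempty := hBnt.nonempty
  have hBcl : IsClosed B := hB.isClosed
  -- A is nonempty
  have hAne : A.Nonempty := by
    by_contra hAe
    rw [Set.not_nonempty_iff_eq_empty] at hAe
    obtain ⟨x₀, hx₀, y₀, hy₀, hxy₀⟩ := hBnt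
    have hv : x₀ - y₀ ≠ 0 := sub_ne_zero_of_ne hxy₀
    have hvn : (0:ℝ) < ‖x₀ - y₀‖ := norm_pos_iff.mpr hv
    have huniv : ∀ z, z ∈ geomDiff B A := by
      intro z w hw; rw [hAe] at hw; exact absurd hw (Set.notMem_empty w)
    have hmem := hdball (huniv (a + ((d+1) * ‖x₀-y₀‖⁻¹) • (x₀-y₀)))
    rw [Metric.mem_closedBall, dist_eq_norm, add_sub_cancel_left, norm_smul,
      Real.norm_eq_abs, abs_of_pos (by positivity)] at hmem
    rw [mul_assoc, inv_mul_cancel₀ hvn.ne', mul_one] at hmem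
    linarith
  have haF : a ∈ geomDiff B A := hball (Metric.mem_closedBall_self hr₀.le)
  set c : ℝ := 8/7 * (Δ * εΔ) with hc
  have hc0 : 0 < c := by positivity
  set K : ℝ := 8 * d / (7 * r₀) * εΔ * Δ with hK
  have hKc : c * d / r₀ = K := by rw [hK, hc]; field_simp
  have hK0 : 0 ≤ K := by rw [hK]; positivity
  apply Metric.hausdorffDist_le_of_mem_dist hK0
  · -- every point of geomDiff is in the polytope, at distance 0
    intro y hy
    exact ⟨y, fun p hp => geomDiff_halfspace hAne hB hy p, by rw [dist_self]; exact hK0⟩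
  · -- every point of the polytope is within K of geomDiff
    intro x hx
    have hstep3 : ∀ p : EuclideanSpace ℝ (Fin n), ‖p‖ = 1 →
        (inner ℝ p x : ℝ) ≤ suppF p B - suppF p A + c :=
      fun p hp => grid_estimate hA hAne hB hBc hBne hΔ0 hΔhalf hε0 hδ hC hx p hp
    set lam : ℝ := r₀ / (r₀ + c) with hlam
    have hrc : (0:ℝ) < r₀ + c := by linarith
    have hlam0 : 0 < lam := by positivity
    have hlam1 : lam ≤ 1 := by rw [hlam, div_le_one hrc]; linarith
    set y : EuclideanSpace ℝ (Fin n) := a + lam • (x - a) with hy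
    have hyF : y ∈ geomDiff B A := by
      apply mem_geomDiff_of_halfspaces hBc hBcl hBne hB hA
      intro p hp
      have hpp1 : (inner ℝ p p : ℝ) = 1 := by
        rw [real_inner_self_eq_norm_sq, hp]; norm_num
      -- the ball gives a lower bound on the halfspace gap
      have hgr : (inner ℝ p a : ℝ) + r₀ ≤ suppF p B - suppF p A := by
        have hz : a + r₀ • p ∈ geomDiff B A := by
          apply hball
          rw [Metric.mem_closedBall, dist_eq_norm, add_sub_cancel_left, norm_smul, hp,
            Real.norm_eq_abs, abs_of_pos hr₀, mul_one]
        have := geomDiff_halfspace hAne hB hz p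
        rw [inner_add_right, real_inner_smul_right, hpp1] at this
        linarith
      have h1 := hstep3 p hp
      rw [hy, inner_add_right, real_inner_smul_right, inner_sub_right]
      have h2 : (inner ℝ p x : ℝ) - (inner ℝ p a : ℝ)
          ≤ (suppF p B - suppF p A - (inner ℝ p a : ℝ)) + c := by linarith
      have h3 : lam * ((inner ℝ p x : ℝ) - (inner ℝ p a : ℝ))
          ≤ lam * ((suppF p B - suppF p A - (inner ℝ p a : ℝ)) + c) :=
        mul_le_mul_of_nonneg_left h2 hlam0.le
      have h4 : lam * ((suppF p B - suppF p A - (inner ℝ p a : ℝ)) + c)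
          ≤ suppF p B - suppF p A - (inner ℝ p a : ℝ) := by
        rw [hlam, div_mul_eq_mul_div, div_le_iff₀ hrc]
        nlinarith
      linarith
    -- distance estimate
    have hxy : x - y = (1 - lam) • (x - a) := by rw [hy]; module
    have hnxy : ‖x - y‖ = (1 - lam) * ‖x - a‖ := by
      rw [hxy, norm_smul, Real.norm_eq_abs, abs_of_nonneg (by linarith)]
    have hyd : ‖y - a‖ ≤ d := by
      have := hdball hyF
      rwa [Metric.mem_closedBall, dist_eq_norm] at this
    have htri : ‖x - a‖ ≤ ‖x - y‖ + ‖y - a‖ := by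
      have := norm_sub_le_norm_sub_add_norm_sub x y a
      linarith [this]
    have hxa : lam * ‖x - a‖ ≤ d := by
      rw [hnxy] at htri
      nlinarith [norm_nonneg (x - a)]
    have hxad : ‖x - a‖ ≤ d * (r₀ + c) / r₀ := by
      rw [hlam] at hxa
      rw [le_div_iff₀ hr₀]
      calc ‖x - a‖ * r₀ = (r₀ / (r₀ + c) * ‖x - a‖) * (r₀ + c) := by field_simp
        _ ≤ d * (r₀ + c) := mul_le_mul_of_nonneg_right hxa hrc.le
    refine ⟨y, hyF, ?_⟩
    rw [dist_eq_norm, hnxy]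
    have h1lam : 1 - lam = c / (r₀ + c) := by rw [hlam]; field_simp; ring
    calc (1 - lam) * ‖x - a‖ ≤ (1 - lam) * (d * (r₀ + c) / r₀) :=
          mul_le_mul_of_nonneg_left hxad (by linarith)
      _ = c * d / r₀ := by rw [h1lam]; field_simp
      _ = K := hKc
end

section
/- Let A, B ⊂ ℝⁿ be compact uniformly convex sets with moduli of convexity δ_A and δ_B, and suppose the closed ball B_{r₀}(a) ⊆ A ∩ B for some r₀ > 0 and a ∈ ℝⁿ. Let 𝒞 be a grid with step Δ ∈ (0,1/2), let Â and B̂ be the external polyhedral approximations of A and B on 𝒞, and suppose max{diam Â, diam B̂} ≤ d. Suppose ε^A_Δ ∈ (0, diam A) satisfies δ_A(ε^A_Δ)/ε^A_Δ = Δ/(4 − Δ²) and ε^B_Δ ∈ (0, diam B) satisfies δ_B(ε^B_Δ)/ε^B_Δ = Δ/(4 − Δ²). Then h(A ∩ B, Â ∩ B̂) ≤ (8/7)·(max{ε^A_Δ, ε^B_Δ} + (d/r₀)·(ε^A_Δ + ε^B_Δ))·Δ. -/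
open Set Metric Pointwise

variable {n : ℕ}

lemma proj_exists {A : Set (EuclideanSpace ℝ (Fin n))} (hA : IsCompact A) (hAc : Convex ℝ A)
    (hne : A.Nonempty) (x : EuclideanSpace ℝ (Fin n)) :
    ∃ y ∈ A, ∀ w ∈ A, (inner ℝ (x - y) (w - y) : ℝ) ≤ 0 := by
  obtain ⟨y, hy, hmin⟩ := exists_norm_eq_iInf_of_complete_convex hne hA.isComplete hAc x
  exact ⟨y, hy, (norm_eq_iInf_iff_real_inner_le_zero hAc hy).1 hmin⟩

set_option maxHeartbeats 1000000 in
/-- Key scaling property: if `δ` is admissible for `ε₁` then `(ε₂/ε₁)δ` "works" at the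
midpoint of any pair at distance `ε₂ ≥ ε₁`. -/
lemma ptM {A : Set (EuclideanSpace ℝ (Fin n))} (hA : IsCompact A) (hAc : Convex ℝ A)
    {x₁ x₂ : EuclideanSpace ℝ (Fin n)} (h₁ : x₁ ∈ A) (h₂ : x₂ ∈ A) {ε₁ δ : ℝ}
    (hε₁ : 0 < ε₁) (hle : ε₁ ≤ ‖x₁ - x₂‖) (hδ0 : 0 ≤ δ)
    (hadm : ∀ y₁ ∈ A, ∀ y₂ ∈ A, ‖y₁ - y₂‖ = ε₁ → Metric.closedBall (midpoint ℝ y₁ y₂) δ ⊆ A)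
    {u : EuclideanSpace ℝ (Fin n)} (hu : ‖u‖ ≤ 1) :
    midpoint ℝ x₁ x₂ + ((‖x₁ - x₂‖ / ε₁) * δ) • u ∈ A := by
  by_contra hz
  set ε₂ := ‖x₁ - x₂‖ with hε₂def
  have hε₂ : 0 < ε₂ := lt_of_lt_of_le hε₁ hle
  set m := midpoint ℝ x₁ x₂ with hm
  set z₀ := m + ((ε₂ / ε₁) * δ) • u with hz₀
  have hne : A.Nonempty := ⟨x₁, h₁⟩
  obtain ⟨w, hw, hproj⟩ := proj_exists hA hAc hne z₀
  set p := z₀ - w with hp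
  have hρ : 0 < ‖p‖ := by
    rw [norm_pos_iff]
    intro h0
    exact hz (by rw [show z₀ = w from by rwa [sub_eq_zero] at h0]; exact hw)
  have hkey : ∀ v ∈ A, (inner ℝ p v : ℝ) ≤ inner ℝ p w := by
    intro v hv
    have h := hproj v hv
    rw [inner_sub_right] at h; linarith
  obtain ⟨xs, hxs, hmax⟩ := hA.exists_isMaxOn hne
    (f := fun v => (inner ℝ p v : ℝ)) ((continuous_const.inner continuous_id).continuousOn)
  have hsw : (inner ℝ p xs : ℝ) = inner ℝ p w := le_antisymm (hkey xs hxs) (hmax hw)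
  set lam := ε₁ / ε₂ with hlam
  have hlam0 : 0 < lam := div_pos hε₁ hε₂
  have hlam1 : lam ≤ 1 := (div_le_one hε₂).2 hle
  set y₁ := (1 - lam) • xs + lam • x₁ with hy₁
  set y₂ := (1 - lam) • xs + lam • x₂ with hy₂
  have hy₁A : y₁ ∈ A := hAc hxs h₁ (by linarith) hlam0.le (by ring)
  have hy₂A : y₂ ∈ A := hAc hxs h₂ (by linarith) hlam0.le (by ring)
  have hdist : ‖y₁ - y₂‖ = ε₁ := by
    have he : y₁ - y₂ = lam • (x₁ - x₂) := by rw [hy₁, hy₂]; module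
    rw [he, norm_smul, Real.norm_eq_abs, abs_of_pos hlam0, ← hε₂def, hlam]
    field_simp
  set q := midpoint ℝ y₁ y₂ + (δ * ‖p‖⁻¹) • p with hq
  have hqball : q ∈ Metric.closedBall (midpoint ℝ y₁ y₂) δ := by
    rw [Metric.mem_closedBall, dist_eq_norm, hq, add_sub_cancel_left, norm_smul,
      Real.norm_eq_abs, abs_of_nonneg (by positivity)]
    rw [mul_assoc, inv_mul_cancel₀ hρ.ne', mul_one]
  have hqA : q ∈ A := hadm y₁ hy₁A y₂ hy₂A hdist hqball
  -- now the inner ℝ product computations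
  have hipm : (inner ℝ p m : ℝ) = (inner ℝ p x₁ + inner ℝ p x₂) / 2 := by
    rw [hm, midpoint_eq_smul_add, inner_smul_right, inner_add_right, invOf_eq_inv]
    ring
  have hself : (inner ℝ p p : ℝ) = ‖p‖ ^ 2 := real_inner_self_eq_norm_sq p
  have hiq : (inner ℝ p q : ℝ) =
      (1 - lam) * inner ℝ p xs + lam * inner ℝ p m + δ * ‖p‖ := by
    rw [hq, inner_add_right, midpoint_eq_smul_add, hy₁, hy₂]
    simp only [inner_add_right, inner_smul_right]
    rw [hself, hipm, invOf_eq_inv]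
    have hpne : ‖p‖ ≠ 0 := hρ.ne'
    field_simp
    ring
  have hiz : (inner ℝ p z₀ : ℝ) = inner ℝ p m + (ε₂ / ε₁) * δ * inner ℝ p u := by
    rw [hz₀, inner_add_right, inner_smul_right]
  have hiu : (inner ℝ p u : ℝ) ≤ ‖p‖ := by
    calc (inner ℝ p u : ℝ) ≤ ‖p‖ * ‖u‖ := real_inner_le_norm p u
    _ ≤ ‖p‖ * 1 := by nlinarith [hρ.le]
    _ = ‖p‖ := mul_one _
  have hqle : (inner ℝ p q : ℝ) ≤ inner ℝ p xs := hmax hqA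
  have hzgt : (inner ℝ p z₀ : ℝ) = inner ℝ p w + ‖p‖ ^ 2 := by
    have h4 : (inner ℝ p z₀ : ℝ) - inner ℝ p w = inner ℝ p p := by rw [← inner_sub_right]
    rw [hself] at h4; linarith
  have hpm : lam * (inner ℝ p m : ℝ) ≤ lam * inner ℝ p xs - δ * ‖p‖ := by
    rw [hiq] at hqle; linarith
  have hmul : lam * (ε₂ / ε₁) = 1 := by rw [hlam]; field_simp
  have h2 : δ * (inner ℝ p u : ℝ) ≤ δ * ‖p‖ := mul_le_mul_of_nonneg_left hiu hδ0
  have h3 : lam * (inner ℝ p z₀ : ℝ) ≤ lam * inner ℝ p xs := by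
    rw [hiz]
    have expand : lam * ((inner ℝ p m : ℝ) + ε₂ / ε₁ * δ * inner ℝ p u) =
        lam * inner ℝ p m + lam * (ε₂ / ε₁) * (δ * inner ℝ p u) := by ring
    rw [expand, hmul, one_mul]
    linarith
  have hfinal : (inner ℝ p z₀ : ℝ) ≤ inner ℝ p xs := le_of_mul_le_mul_left h3 hlam0
  rw [hzgt, ← hsw] at hfinal
  nlinarith [hρ]

lemma suppF_le_of_mem {A : Set (EuclideanSpace ℝ (Fin n))} (hA : IsCompact A)
    {x : EuclideanSpace ℝ (Fin n)} (hx : x ∈ A) (p : EuclideanSpace ℝ (Fin n)) :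
    (inner ℝ p x : ℝ) ≤ suppF p A := by
  apply le_csSup
  · exact ((hA.image (continuous_const.inner continuous_id)).isBounded).bddAbove
  · exact ⟨x, hx, rfl⟩

lemma suppF_eq_max {A : Set (EuclideanSpace ℝ (Fin n))} {p x : EuclideanSpace ℝ (Fin n)}
    (hx : x ∈ A) (hmax : ∀ w ∈ A, (inner ℝ p w : ℝ) ≤ inner ℝ p x) :
    suppF p A = inner ℝ p x := by
  apply IsGreatest.csSup_eq
  constructor
  · exact ⟨x, hx, rfl⟩
  · rintro v ⟨w, hw, rfl⟩; exact hmax w hw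

/-- facts about a positive grid decomposition -/
lemma decomp_facts {Δ : ℝ} (hΔ0 : 0 < Δ) {k : ℕ}
    {q : Fin k → EuclideanSpace ℝ (Fin n)} {α : Fin k → ℝ}
    (hq1 : ∀ i, ‖q i‖ = 1) (hα : ∀ i, 0 < α i) (hqq : ∀ i j, ‖q i - q j‖ < Δ) :
    ‖∑ i, α i • q i‖ ≤ ∑ i, α i ∧
    (∑ i, α i) ^ 2 * (1 - Δ ^ 2 / 2) ≤ ‖∑ i, α i • q i‖ ^ 2 ∧
    (∀ i, (1 - Δ ^ 2 / 2) * (∑ j, α j) ≤ (inner ℝ (q i) (∑ j, α j • q j) : ℝ)) := by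
  have hij : ∀ i j, 1 - Δ ^ 2 / 2 ≤ (inner ℝ (q i) (q j) : ℝ) := by
    intro i j
    have h := norm_sub_sq_real (q i) (q j)
    rw [hq1 i, hq1 j] at h
    have h2 : ‖q i - q j‖ ^ 2 ≤ Δ ^ 2 := by
      have := hqq i j
      nlinarith [norm_nonneg (q i - q j)]
    nlinarith
  refine ⟨?_, ?_, ?_⟩
  · calc ‖∑ i, α i • q i‖ ≤ ∑ i, ‖α i • q i‖ := norm_sum_le _ _
    _ = ∑ i, α i := by
        apply Finset.sum_congr rfl
        intro i _
        rw [norm_smul, Real.norm_eq_abs, abs_of_pos (hα i), hq1 i, mul_one]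
  · rw [← real_inner_self_eq_norm_sq]
    rw [sum_inner]
    have : ∀ i ∈ Finset.univ, α i * (1 - Δ^2/2) * (∑ j, α j) ≤
        (inner ℝ (α i • q i) (∑ j, α j • q j) : ℝ) := by
      intro i _
      rw [real_inner_smul_left, inner_sum]
      simp only [real_inner_smul_right]
      have hterm : ∀ j ∈ Finset.univ, α j * (1 - Δ^2/2) ≤ α j * inner ℝ (q i) (q j) :=
        fun j _ => mul_le_mul_of_nonneg_left (hij i j) (hα j).le
      have hsum := Finset.sum_le_sum hterm
      rw [← Finset.sum_mul] at hsum
      calc α i * (1 - Δ^2/2) * (∑ j, α j) = α i * ((∑ j, α j) * (1 - Δ^2/2)) := by ring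
      _ ≤ α i * (∑ j, α j * inner ℝ (q i) (q j)) :=
          mul_le_mul_of_nonneg_left (by rw [Finset.sum_mul] at hsum ⊢; exact hsum) (hα i).le
    have h5 := Finset.sum_le_sum this
    have h6 : ∑ i, α i * (1 - Δ^2/2) * (∑ j, α j) = (∑ i, α i)^2 * (1-Δ^2/2) := by
      rw [← Finset.sum_mul, ← Finset.sum_mul]; ring
    rw [h6] at h5
    exact h5
  · intro i
    rw [inner_sum]
    simp only [real_inner_smul_right]
    have hterm : ∀ j ∈ Finset.univ, α j * (1 - Δ^2/2) ≤ α j * inner ℝ (q i) (q j) :=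
      fun j _ => mul_le_mul_of_nonneg_left (hij i j) (hα j).le
    have hsum := Finset.sum_le_sum hterm
    rw [← Finset.sum_mul] at hsum
    linarith [hsum]

set_option maxHeartbeats 1000000 in
lemma approx_dist {A : Set (EuclideanSpace ℝ (Fin n))} (hA : IsCompact A) (hAc : Convex ℝ A)
    (hne : A.Nonempty) {Δ εA : ℝ} (hΔ : Δ ∈ Set.Ioo (0:ℝ) (1/2))
    {C : Finset (EuclideanSpace ℝ (Fin n))} (hC : IsGrid C Δ) (hε : 0 < εA)
    (heq : modConv A εA / εA = Δ / (4 - Δ ^ 2))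
    {x : EuclideanSpace ℝ (Fin n)} (hx : x ∈ polyApprox C A) :
    ∃ y ∈ A, dist x y ≤ 8 / 7 * Δ * εA := by
  obtain ⟨hΔ0, hΔhalf⟩ := hΔ
  have hbound0 : (0:ℝ) ≤ 8/7 * Δ * εA := by positivity
  obtain ⟨y, hy, hproj⟩ := proj_exists hA hAc hne x
  by_cases hxy : x = y
  · exact ⟨y, hy, by rw [hxy, dist_self]; exact hbound0⟩
  have hpn : (0:ℝ) < ‖x - y‖ := by
    rw [norm_pos_iff, sub_ne_zero]; exact hxy
  set ph := ‖x - y‖⁻¹ • (x - y) with hph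
  have hphn : ‖ph‖ = 1 := by
    rw [hph, norm_smul, Real.norm_eq_abs, abs_of_pos (inv_pos.2 hpn), inv_mul_cancel₀ hpn.ne']
  have hkey : ∀ w ∈ A, (inner ℝ ph w : ℝ) ≤ inner ℝ ph y := by
    intro w hw
    rw [hph, real_inner_smul_left, real_inner_smul_left]
    have h2 : (inner ℝ (x-y) w : ℝ) ≤ inner ℝ (x-y) y := by
      have h := hproj w hw; rw [inner_sub_right] at h; linarith
    exact mul_le_mul_of_nonneg_left h2 (inv_pos.2 hpn).le
  have hipx : (inner ℝ ph (x - y) : ℝ) = ‖x - y‖ := by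
    rw [hph, real_inner_smul_left, real_inner_self_eq_norm_sq]
    field_simp
  by_cases hphC : ph ∈ C
  · exfalso
    have h1 : (inner ℝ ph x : ℝ) ≤ suppF ph A := hx ph hphC
    have h2 : suppF ph A ≤ inner ℝ ph y := by
      apply csSup_le (hne.image _)
      rintro v ⟨w, hw, rfl⟩; exact hkey w hw
    have h3 : (inner ℝ ph (x - y) : ℝ) ≤ 0 := by rw [inner_sub_right]; linarith
    rw [hipx] at h3; linarith
  have hph0 : ph ≠ 0 := by
    intro h0; rw [h0, norm_zero] at hphn; norm_num at hphn
  have hphC' : ‖ph‖⁻¹ • ph ∉ C := by rw [hphn, inv_one, one_smul]; exact hphC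
  obtain ⟨k, q, α, hqC, hα, hsum, hqq⟩ := hC.2 ph hph0 hphC'
  have hq1 : ∀ i, ‖q i‖ = 1 := fun i => hC.1 _ (hqC i)
  obtain ⟨hd1, hd2, hd3⟩ := decomp_facts hΔ0 hq1 hα hqq
  rw [← hsum] at hd1 hd2 hd3
  set σ := ∑ i, α i with hσ
  have hσ1 : 1 ≤ σ := by rw [← hphn]; exact hd1
  have h78 : (7:ℝ)/8 ≤ 1 - Δ^2/2 := by nlinarith
  have hd2' : σ^2 * (1 - Δ^2/2) ≤ 1 := by rw [hphn] at hd2; nlinarith [hd2]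
  have hσ87 : σ ≤ 8/7 := by nlinarith [hd2', hσ1, h78]
  have hqp : ∀ i, ‖q i - ph‖ ≤ Δ := by
    intro i
    have h1 := hd3 i
    have h2 : 1 - Δ^2/2 ≤ (inner ℝ (q i) ph : ℝ) := by nlinarith [h1, hσ1, h78]
    have h3 := norm_sub_sq_real (q i) ph
    rw [hq1 i, hphn] at h3
    nlinarith [norm_nonneg (q i - ph)]
  have hxi : ∀ i : Fin k, ∃ z ∈ A, (∀ w ∈ A, (inner ℝ (q i) w : ℝ) ≤ inner ℝ (q i) z) := by
    intro i
    obtain ⟨z, hz, hmz⟩ := hA.exists_isMaxOn hne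
      (f := fun v => (inner ℝ (q i) v : ℝ)) ((continuous_const.inner continuous_id).continuousOn)
    exact ⟨z, hz, fun w hw => hmz hw⟩
  choose xi hxiA hximax using hxi
  have hεi : ∀ i, ‖xi i - y‖ ≤ εA := by
    intro i
    by_contra hgt
    push_neg at hgt
    have hSle : ∀ δ ∈ {δ : ℝ | 0 ≤ δ ∧ ∀ x₁ ∈ A, ∀ x₂ ∈ A, ‖x₁ - x₂‖ = εA →
        Metric.closedBall (midpoint ℝ x₁ x₂) δ ⊆ A}, δ ≤ Δ * εA / 4 := by
      rintro δ ⟨hδ0, hδadm⟩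
      have hε₂eq : ‖y - xi i‖ = ‖xi i - y‖ := norm_sub_rev _ _
      set ε₂ := ‖y - xi i‖ with hε₂
      have hε₂gt : εA < ε₂ := by rw [hε₂eq]; exact hgt
      have hε₂0 : 0 < ε₂ := lt_trans hε hε₂gt
      have hmem1 := ptM hA hAc hy (hxiA i) hε (le_of_lt hε₂gt) hδ0 hδadm
        (u := ph) (le_of_eq hphn)
      have hmem2 := ptM hA hAc hy (hxiA i) hε (le_of_lt hε₂gt) hδ0 hδadm
        (u := q i) (le_of_eq (hq1 i))
      set c := ε₂ / εA * δ with hc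
      set md := midpoint ℝ y (xi i) with hmd
      have hmid1 : (inner ℝ ph md : ℝ) = (inner ℝ ph y + inner ℝ ph (xi i)) / 2 := by
        rw [hmd, midpoint_eq_smul_add, inner_smul_right, inner_add_right, invOf_eq_inv]; ring
      have hmid2 : (inner ℝ (q i) md : ℝ) = (inner ℝ (q i) y + inner ℝ (q i) (xi i)) / 2 := by
        rw [hmd, midpoint_eq_smul_add, inner_smul_right, inner_add_right, invOf_eq_inv]; ring
      have hphph : (inner ℝ ph ph : ℝ) = 1 := by
        rw [real_inner_self_eq_norm_sq, hphn]; norm_num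
      have hqiqi : (inner ℝ (q i) (q i) : ℝ) = 1 := by
        rw [real_inner_self_eq_norm_sq, hq1 i]; norm_num
      have hin1 : (inner ℝ ph (md + c • ph) : ℝ) ≤ inner ℝ ph y := hkey _ hmem1
      have hin2 : (inner ℝ (q i) (md + c • q i) : ℝ) ≤ inner ℝ (q i) (xi i) :=
        hximax i _ hmem2
      rw [inner_add_right, inner_smul_right, hphph, hmid1] at hin1
      rw [inner_add_right, inner_smul_right, hqiqi, hmid2] at hin2
      have h4c : 4 * c ≤ (inner ℝ (q i - ph) (xi i - y) : ℝ) := by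
        rw [inner_sub_left, inner_sub_right, inner_sub_right]
        linarith
      have hcs : (inner ℝ (q i - ph) (xi i - y) : ℝ) ≤ Δ * ε₂ := by
        calc (inner ℝ (q i - ph) (xi i - y) : ℝ) ≤ ‖q i - ph‖ * ‖xi i - y‖ :=
          real_inner_le_norm _ _
        _ ≤ Δ * ε₂ := by
            rw [← hε₂eq]
            exact mul_le_mul_of_nonneg_right (hqp i) hε₂0.le
      have hchain : 4 * c ≤ Δ * ε₂ := le_trans h4c hcs
      have hchain2 : 4 * (ε₂ * δ) / εA ≤ Δ * ε₂ := by
        rw [hc] at hchain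
        calc 4 * (ε₂ * δ) / εA = 4 * (ε₂ / εA * δ) := by ring
        _ ≤ Δ * ε₂ := hchain
      have hchain3 : 4 * (ε₂ * δ) ≤ Δ * ε₂ * εA := (div_le_iff₀ hε).1 hchain2
      have h4ε₂ : (0:ℝ) < 4 * ε₂ := by linarith
      rw [show Δ * εA / 4 = Δ * ε₂ * εA / (4 * ε₂) from by field_simp]
      rw [le_div_iff₀ h4ε₂]
      calc δ * (4 * ε₂) = 4 * (ε₂ * δ) := by ring
      _ ≤ Δ * ε₂ * εA := hchain3
    have hsup : modConv A εA ≤ Δ * εA / 4 := by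
      unfold modConv
      exact Real.sSup_le hSle (by positivity)
    have h4Δ : (0:ℝ) < 4 - Δ ^ 2 := by nlinarith
    have heq2 : modConv A εA = Δ / (4 - Δ ^ 2) * εA := by
      rw [div_eq_iff hε.ne'] at heq
      exact heq
    rw [heq2, div_mul_eq_mul_div, div_le_iff₀ h4Δ] at hsup
    nlinarith [hsup, mul_pos (mul_pos hΔ0 hε) (mul_pos hΔ0 hΔ0)]
  refine ⟨y, hy, ?_⟩
  have hterm : ∀ i : Fin k, (inner ℝ (q i) (x - y) : ℝ) ≤ Δ * εA := by
    intro i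
    have h1 : (inner ℝ (q i) x : ℝ) ≤ suppF (q i) A := hx (q i) (hqC i)
    have h2 : suppF (q i) A = inner ℝ (q i) (xi i) := suppF_eq_max (hxiA i) (hximax i)
    have h3 : (inner ℝ ph (xi i - y) : ℝ) ≤ 0 := by
      rw [inner_sub_right]; linarith [hkey (xi i) (hxiA i)]
    have h4 : (inner ℝ (q i - ph) (xi i - y) : ℝ) ≤ Δ * εA := by
      calc (inner ℝ (q i - ph) (xi i - y) : ℝ) ≤ ‖q i - ph‖ * ‖xi i - y‖ :=
        real_inner_le_norm _ _
      _ ≤ Δ * εA := mul_le_mul (hqp i) (hεi i) (norm_nonneg _) hΔ0.le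
    have h5 : (inner ℝ (q i) (xi i - y) : ℝ) ≤ Δ * εA := by
      have := h4
      rw [inner_sub_left] at this
      linarith
    rw [inner_sub_right]
    rw [inner_sub_right] at h5
    linarith
  have hsum2 : (inner ℝ ph (x - y) : ℝ) = ∑ i, α i * inner ℝ (q i) (x - y) := by
    rw [hsum, sum_inner]
    exact Finset.sum_congr rfl fun i _ => real_inner_smul_left _ _ _
  have hfin : (inner ℝ ph (x - y) : ℝ) ≤ σ * (Δ * εA) := by
    rw [hsum2, hσ, Finset.sum_mul]
    apply Finset.sum_le_sum
    intro i _
    exact mul_le_mul_of_nonneg_left (hterm i) (hα i).le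
  rw [hipx] at hfin
  rw [dist_eq_norm]
  calc ‖x - y‖ ≤ σ * (Δ * εA) := hfin
  _ ≤ 8/7 * (Δ * εA) := mul_le_mul_of_nonneg_right hσ87 (by positivity)
  _ = 8/7 * Δ * εA := by ring

lemma poly_bounded {A : Set (EuclideanSpace ℝ (Fin n))} (hA : IsCompact A)
    {Δ : ℝ} (hΔ : Δ ∈ Set.Ioo (0:ℝ) (1/2)) {C : Finset (EuclideanSpace ℝ (Fin n))}
    (hC : IsGrid C Δ) : Bornology.IsBounded (polyApprox C A) := by
  obtain ⟨r, hr⟩ := hA.isBounded.subset_closedBall 0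
  set R := max r 0 with hR
  have hR0 : (0:ℝ) ≤ R := le_max_right _ _
  have hAR : ∀ w ∈ A, ‖w‖ ≤ R := by
    intro w hw
    have h := hr hw
    rw [Metric.mem_closedBall, dist_zero_right] at h
    exact le_trans h (le_max_left _ _)
  have h78 : (7:ℝ)/8 ≤ 1 - Δ^2/2 := by nlinarith [hΔ.1, hΔ.2]
  have hsupp : ∀ p : EuclideanSpace ℝ (Fin n), suppF p A ≤ ‖p‖ * R := by
    intro p
    apply Real.sSup_le _ (by positivity)
    rintro v ⟨w, hw, rfl⟩
    calc (inner ℝ p w : ℝ) ≤ ‖p‖ * ‖w‖ := real_inner_le_norm _ _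
    _ ≤ ‖p‖ * R := mul_le_mul_of_nonneg_left (hAR w hw) (norm_nonneg _)
  apply Bornology.IsBounded.subset
    (Metric.isBounded_closedBall (x := (0:EuclideanSpace ℝ (Fin n))) (r := 8/7*R))
  intro x hx
  rw [Metric.mem_closedBall, dist_zero_right]
  by_cases hx0 : x = 0
  · rw [hx0, norm_zero]; positivity
  have hxn : 0 < ‖x‖ := norm_pos_iff.2 hx0
  by_cases hph : ‖x‖⁻¹ • x ∈ C
  · have h1 : (inner ℝ (‖x‖⁻¹ • x) x : ℝ) ≤ suppF (‖x‖⁻¹ • x) A := hx _ hph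
    have hn1 : ‖(‖x‖⁻¹ • x : EuclideanSpace ℝ (Fin n))‖ = 1 := by
      rw [norm_smul, Real.norm_eq_abs, abs_of_pos (inv_pos.2 hxn), inv_mul_cancel₀ hxn.ne']
    have h2 := hsupp (‖x‖⁻¹ • x)
    rw [hn1, one_mul] at h2
    rw [real_inner_smul_left, real_inner_self_eq_norm_sq] at h1
    have h3 : ‖x‖⁻¹ * ‖x‖^2 = ‖x‖ := by field_simp
    rw [h3] at h1
    nlinarith [hR0]
  · obtain ⟨k, q, α, hqC, hα, hsum, hqq⟩ := hC.2 x hx0 hph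
    have hq1 : ∀ i, ‖q i‖ = 1 := fun i => hC.1 _ (hqC i)
    obtain ⟨hd1, hd2, _⟩ := decomp_facts hΔ.1 hq1 hα hqq
    rw [← hsum] at hd1 hd2
    set σ := ∑ i, α i with hσ
    have hx2 : ‖x‖^2 ≤ σ * R := by
      rw [← real_inner_self_eq_norm_sq]
      have hrw : (inner ℝ x x : ℝ) = ∑ i, α i * inner ℝ (q i) x := by
        nth_rewrite 1 [hsum]
        rw [sum_inner]
        exact Finset.sum_congr rfl fun i _ => real_inner_smul_left _ _ _
      rw [hrw, hσ, Finset.sum_mul]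
      apply Finset.sum_le_sum
      intro i _
      have hq : (inner ℝ (q i) x : ℝ) ≤ R := by
        have := le_trans (hx (q i) (hqC i)) (hsupp (q i))
        rwa [hq1 i, one_mul] at this
      exact mul_le_mul_of_nonneg_left hq (hα i).le
    have hσ0 : 0 < σ := lt_of_lt_of_le hxn hd1
    have hstep : (7:ℝ)/8 * σ^2 ≤ σ * R := by nlinarith [hd2, hx2, sq_nonneg σ, h78]
    have hσR : σ ≤ 8/7 * R := by nlinarith [hstep, hσ0, mul_pos hσ0 hσ0]
    linarith [hd1]

set_option maxHeartbeats 1000000 in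
/-- Theorem 3.2: approximation of the intersection of two uniformly
convex compacta by intersections of their polyhedral approximations. -/
theorem hausdorffDist_inter_polyApprox
    (n : ℕ) (A B : Set (EuclideanSpace ℝ (Fin n)))
    (hA : IsCompact A) (hAc : Convex ℝ A) (hucA : UnifConvex A)
    (hB : IsCompact B) (hBc : Convex ℝ B) (hucB : UnifConvex B)
    (r₀ d : ℝ) (hr₀ : 0 < r₀) (a : EuclideanSpace ℝ (Fin n))
    (hball : Metric.closedBall a r₀ ⊆ A ∩ B)
    (Δ εA εB : ℝ) (hΔ : Δ ∈ Set.Ioo (0 : ℝ) (1/2))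
    (C : Finset (EuclideanSpace ℝ (Fin n))) (hC : IsGrid C Δ)
    (hdA : Metric.diam (polyApprox C A) ≤ d) (hdB : Metric.diam (polyApprox C B) ≤ d)
    (hεA : εA ∈ Set.Ioo 0 (Metric.diam A))
    (heqA : modConv A εA / εA = Δ / (4 - Δ^2))
    (hεB : εB ∈ Set.Ioo 0 (Metric.diam B))
    (heqB : modConv B εB / εB = Δ / (4 - Δ^2)) :
    Metric.hausdorffDist (A ∩ B) (polyApprox C A ∩ polyApprox C B) ≤
      8/7 * (max εA εB + d / r₀ * (εA + εB)) * Δ := by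
  obtain ⟨hΔ0, hΔh⟩ := hΔ
  have hane : a ∈ A ∩ B := hball (Metric.mem_closedBall_self hr₀.le)
  have hAne : A.Nonempty := ⟨a, hane.1⟩
  have hBne : B.Nonempty := ⟨a, hane.2⟩
  have hd0 : (0:ℝ) ≤ d := le_trans Metric.diam_nonneg hdA
  have hmax0 : (0:ℝ) ≤ max εA εB := le_trans hεA.1.le (le_max_left _ _)
  have hS0 : (0:ℝ) < εA + εB := by have := hεA.1; have := hεB.1; linarith
  have hRHS0 : (0:ℝ) ≤ 8/7 * (max εA εB + d / r₀ * (εA + εB)) * Δ := by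
    have h1 : (0:ℝ) ≤ d / r₀ * (εA + εB) := by positivity
    have h2 : (0:ℝ) ≤ max εA εB + d / r₀ * (εA + εB) := by linarith
    positivity
  have hsubA : A ⊆ polyApprox C A := fun w hw p _ => suppF_le_of_mem hA hw p
  have hsubB : B ⊆ polyApprox C B := fun w hw p _ => suppF_le_of_mem hB hw p
  apply Metric.hausdorffDist_le_of_mem_dist hRHS0
  · intro x hx
    exact ⟨x, ⟨hsubA hx.1, hsubB hx.2⟩, by rw [dist_self]; exact hRHS0⟩
  · intro y hy
    obtain ⟨u, hu, hud⟩ := approx_dist hA hAc hAne ⟨hΔ0, hΔh⟩ hC hεA.1 heqA hy.1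
    obtain ⟨v, hv, hvd⟩ := approx_dist hB hBc hBne ⟨hΔ0, hΔh⟩ hC hεB.1 heqB hy.2
    set K := 8/7*Δ with hK
    have hK0 : (0:ℝ) < K := by rw [hK]; positivity
    set S := εA + εB with hS
    have hKS0 : (0:ℝ) < K * S := mul_pos hK0 hS0
    have hden : (0:ℝ) < r₀ + K*S := by linarith
    set t := K*S/(r₀ + K*S) with ht
    have ht0 : (0:ℝ) < t := by rw [ht]; positivity
    have ht1 : t < 1 := by rw [ht, div_lt_one hden]; linarith
    have hrt : (1-t)/t = r₀/(K*S) := by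
      rw [ht]
      rw [show 1 - K*S/(r₀+K*S) = r₀/(r₀+K*S) from by rw [one_sub_div hden.ne']; ring]
      have h1 : (r₀ + K*S) ≠ 0 := hden.ne'
      have h2 : K*S ≠ 0 := hKS0.ne'
      field_simp
    set z := (1-t) • y + t • a with hz
    have hzmem : ∀ (X : Set (EuclideanSpace ℝ (Fin n))), Convex ℝ X →
        Metric.closedBall a r₀ ⊆ X → ∀ w ∈ X, ∀ εX : ℝ, 0 < εX → εX ≤ S →
        dist y w ≤ K * εX → z ∈ X := by
      intro X hXc hballX w hw εX hεX0 hεXS hyw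
      have hst0 : (0:ℝ) ≤ (1-t)/t := div_nonneg (by linarith) ht0.le
      have hcmem : a + ((1-t)/t) • (y - w) ∈ X := by
        apply hballX
        rw [Metric.mem_closedBall, dist_eq_norm, add_sub_cancel_left, norm_smul,
          Real.norm_eq_abs, abs_of_nonneg hst0, hrt]
        have h1 : ‖y - w‖ ≤ K * εX := by rw [← dist_eq_norm]; exact hyw
        have h2 : r₀/(K*S) * ‖y - w‖ ≤ r₀/(K*S) * (K*εX) :=
          mul_le_mul_of_nonneg_left h1 (div_nonneg hr₀.le hKS0.le)
        have h3 : r₀/(K*S) * (K*εX) = r₀ * (εX/S) := by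
          field_simp
        have h4 : r₀ * (εX/S) ≤ r₀ * 1 := by
          apply mul_le_mul_of_nonneg_left _ hr₀.le
          rw [div_le_one hS0]
          exact hεXS
        rw [mul_one] at h4
        linarith [h2, h3 ▸ h2]
      have hts : t * ((1-t)/t) = 1 - t := by field_simp
      have hzeq : z = (1-t) • w + t • (a + ((1-t)/t) • (y - w)) := by
        rw [hz, smul_add, smul_smul, hts]
        module
      rw [hzeq]
      exact hXc hw hcmem (by linarith) ht0.le (by ring)
    have hudK : dist y u ≤ K * εA := by simp only [hK] at hud ⊢; exact hud
    have hvdK : dist y v ≤ K * εB := by simp only [hK] at hvd ⊢; exact hvd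
    have hzA : z ∈ A := hzmem A hAc (fun p hp => (hball hp).1) u hu εA hεA.1
      (by rw [hS]; linarith [hεB.1]) hudK
    have hzB : z ∈ B := hzmem B hBc (fun p hp => (hball hp).2) v hv εB hεB.1
      (by rw [hS]; linarith [hεA.1]) hvdK
    refine ⟨z, ⟨hzA, hzB⟩, ?_⟩
    have hyz : y - z = t • (y - a) := by rw [hz]; module
    have hdyz : dist y z = t * dist y a := by
      rw [dist_eq_norm, hyz, norm_smul, Real.norm_eq_abs, abs_of_pos ht0, ← dist_eq_norm]
    have hya : dist y a ≤ d :=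
      le_trans (Metric.dist_le_diam_of_mem (poly_bounded hA ⟨hΔ0, hΔh⟩ hC) hy.1
        (hsubA hane.1)) hdA
    have htle : t ≤ K*S/r₀ := by
      rw [ht, div_le_div_iff₀ hden hr₀]
      nlinarith [hKS0]
    have hfin1 : dist y z ≤ K*S/r₀ * d := by
      calc dist y z = t * dist y a := hdyz
      _ ≤ t * d := mul_le_mul_of_nonneg_left hya ht0.le
      _ ≤ K*S/r₀ * d := mul_le_mul_of_nonneg_right htle hd0
    have hexp : 8/7 * (max εA εB + d / r₀ * (εA + εB)) * Δ
        = 8/7 * max εA εB * Δ + K*S/r₀*d := by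
      rw [hK, hS]
      field_simp
    have hmaxterm : (0:ℝ) ≤ 8/7 * max εA εB * Δ :=
      mul_nonneg (mul_nonneg (by norm_num) hmax0) hΔ0.le
    linarith [hfin1]
end

section
/- Let A ⊂ ℝⁿ be a compact uniformly convex set with modulus of convexity δ_A. Let r₀ = sup{r ≥ 0 : there exists a ∈ ℝⁿ with B_r(a) ⊆ A}, let a ∈ ℝⁿ be such that B_{r₀}(a) ⊆ A, and let d = sup_{x∈A} ‖x − a‖. If d > 2r₀, then δ_A(d − r₀) ≤ r₀/2; in other words, d ≤ max{2r₀, r₀ + δ_A⁻¹(r₀/2)}. -/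
open Set Metric Pointwise

section Aux

variable {n : ℕ}

lemma inner_bddAbove' {A : Set (EuclideanSpace ℝ (Fin n))} (hA : IsCompact A)
    (ν : EuclideanSpace ℝ (Fin n)) :
    BddAbove ((fun y => (inner ℝ ν y : ℝ)) '' A) :=
  (hA.image (Continuous.inner continuous_const continuous_id)).bddAbove

lemma inner_le_ssup' {A : Set (EuclideanSpace ℝ (Fin n))} (hA : IsCompact A)
    {x ν : EuclideanSpace ℝ (Fin n)} (hx : x ∈ A) :
    (inner ℝ ν x : ℝ) ≤ sSup ((fun y => (inner ℝ ν y : ℝ)) '' A) :=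
  le_csSup (inner_bddAbove' hA ν) ⟨x, hx, rfl⟩

lemma mem_of_forall_inner_le' {A : Set (EuclideanSpace ℝ (Fin n))} (hA : IsCompact A)
    (hconv : Convex ℝ A) (hne : A.Nonempty) {x : EuclideanSpace ℝ (Fin n)}
    (h : ∀ ν : EuclideanSpace ℝ (Fin n), ‖ν‖ = 1 →
      (inner ℝ ν x : ℝ) ≤ sSup ((fun y => (inner ℝ ν y : ℝ)) '' A)) :
    x ∈ A := by
  by_contra hx
  obtain ⟨f, u, hfA, hfx⟩ := geometric_hahn_banach_closed_point hconv hA.isClosed hx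
  set ν₀ : EuclideanSpace ℝ (Fin n) :=
    (InnerProductSpace.toDual ℝ (EuclideanSpace ℝ (Fin n))).symm f with hν₀def
  have hν₀app : ∀ y : EuclideanSpace ℝ (Fin n), (inner ℝ ν₀ y : ℝ) = f y := fun y =>
    InnerProductSpace.toDual_symm_apply
  obtain ⟨b, hb⟩ := hne
  have hν₀ne : ν₀ ≠ 0 := by
    intro h0
    have h1 : f b < f x := lt_trans (hfA b hb) hfx
    rw [← hν₀app, ← hν₀app, h0] at h1
    simp at h1
  have hν₀pos : 0 < ‖ν₀‖ := norm_pos_iff.mpr hν₀ne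
  set ν : EuclideanSpace ℝ (Fin n) := ‖ν₀‖⁻¹ • ν₀ with hνdef
  have hν : ‖ν‖ = 1 := by
    rw [hνdef, norm_smul, norm_inv, norm_norm, inv_mul_cancel₀ hν₀pos.ne']
  have hsup : sSup ((fun y => (inner ℝ ν y : ℝ)) '' A) ≤ ‖ν₀‖⁻¹ * u := by
    apply csSup_le (Set.Nonempty.image _ ⟨b, hb⟩)
    rintro _ ⟨y, hy, rfl⟩
    simp only [hνdef, real_inner_smul_left, hν₀app]
    exact mul_le_mul_of_nonneg_left (hfA y hy).le (inv_nonneg.mpr hν₀pos.le)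
  have hx' : ‖ν₀‖⁻¹ * u < (inner ℝ ν x : ℝ) := by
    rw [hνdef, real_inner_smul_left, hν₀app]
    exact mul_lt_mul_of_pos_left hfx (inv_pos.mpr hν₀pos)
  linarith [h ν hν]

lemma continuous_ssup_inner' {A : Set (EuclideanSpace ℝ (Fin n))} (hA : IsCompact A)
    (hne : A.Nonempty) :
    Continuous fun ν : EuclideanSpace ℝ (Fin n) =>
      sSup ((fun y => (inner ℝ ν y : ℝ)) '' A) := by
  obtain ⟨M, hM⟩ := hA.isBounded.subset_closedBall 0
  have hMnorm : ∀ y ∈ A, ‖y‖ ≤ M := fun y hy => mem_closedBall_zero_iff.mp (hM hy)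
  have key : ∀ ν ν' : EuclideanSpace ℝ (Fin n),
      sSup ((fun y => (inner ℝ ν y : ℝ)) '' A) ≤
        sSup ((fun y => (inner ℝ ν' y : ℝ)) '' A) + M.toNNReal * dist ν ν' := by
    intro ν ν'
    apply csSup_le (hne.image _)
    rintro _ ⟨y, hy, rfl⟩
    have h1 : (inner ℝ ν y : ℝ) = inner ℝ ν' y + inner ℝ (ν - ν') y := by
      rw [inner_sub_left]; ring
    have h2 : (inner ℝ ν' y : ℝ) ≤ sSup ((fun y => (inner ℝ ν' y : ℝ)) '' A) :=
      inner_le_ssup' hA hy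
    have h3 : (inner ℝ (ν - ν') y : ℝ) ≤ M.toNNReal * dist ν ν' := by
      calc (inner ℝ (ν - ν') y : ℝ) ≤ ‖ν - ν'‖ * ‖y‖ := real_inner_le_norm _ _
        _ ≤ ‖ν - ν'‖ * M.toNNReal := by
            apply mul_le_mul_of_nonneg_left _ (norm_nonneg _)
            exact le_trans (hMnorm y hy) (Real.le_coe_toNNReal M)
        _ = M.toNNReal * dist ν ν' := by rw [dist_eq_norm]; ring
    simp only []
    linarith
  exact (LipschitzWith.of_le_add_mul M.toNNReal key).continuous

end Aux

section Contact
variable {n : ℕ}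

lemma exists_contact' {A : Set (EuclideanSpace ℝ (Fin n))} (hA : IsCompact A)
    (hconv : Convex ℝ A) (hne : A.Nonempty) {r₀ : ℝ} (hr0 : 0 ≤ r₀)
    {a : EuclideanSpace ℝ (Fin n)} (ha : Metric.closedBall a r₀ ⊆ A)
    (hmax : ∀ t' > 0, ¬ ∃ c : EuclideanSpace ℝ (Fin n), Metric.closedBall c (r₀ + t') ⊆ A)
    (w : EuclideanSpace ℝ (Fin n)) (hw : ‖w‖ = 1) :
    ∃ ν : EuclideanSpace ℝ (Fin n), ‖ν‖ = 1 ∧ 0 ≤ (inner ℝ ν w : ℝ) ∧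
      ∀ x ∈ A, (inner ℝ ν x : ℝ) ≤ (inner ℝ ν a : ℝ) + r₀ := by
  set S : EuclideanSpace ℝ (Fin n) → ℝ :=
    fun ν => sSup ((fun y => (inner ℝ ν y : ℝ)) '' A) with hSdef
  have hSle : ∀ (ν x : EuclideanSpace ℝ (Fin n)), x ∈ A → (inner ℝ ν x : ℝ) ≤ S ν :=
    fun ν x hx => inner_le_ssup' hA hx
  have hball_mem : ∀ ν : EuclideanSpace ℝ (Fin n), ‖ν‖ = 1 → a + r₀ • ν ∈ A := by
    intro ν hν
    apply ha
    simp only [Metric.mem_closedBall, dist_eq_norm, add_sub_cancel_left, norm_smul, hν,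
      mul_one, Real.norm_eq_abs, abs_of_nonneg hr0, le_refl]
  have hge : ∀ ν : EuclideanSpace ℝ (Fin n), ‖ν‖ = 1 → (inner ℝ ν a : ℝ) + r₀ ≤ S ν := by
    intro ν hν
    have h1 := hSle ν _ (hball_mem ν hν)
    rwa [inner_add_right, real_inner_smul_right, real_inner_self_eq_norm_sq, hν, one_pow,
      mul_one] at h1
  by_contra hcon
  push_neg at hcon
  have hgpos : ∀ ν : EuclideanSpace ℝ (Fin n), ‖ν‖ = 1 → 0 ≤ (inner ℝ ν w : ℝ) →
      (inner ℝ ν a : ℝ) + r₀ < S ν := by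
    intro ν h1 h2
    obtain ⟨x, hx, hlt⟩ := hcon ν h1 h2
    exact lt_of_lt_of_le hlt (hSle ν x hx)
  have hScont : Continuous S := continuous_ssup_inner' hA hne
  have hgcont : Continuous fun ν : EuclideanSpace ℝ (Fin n) => S ν - (inner ℝ ν a : ℝ) :=
    hScont.sub (Continuous.inner continuous_id continuous_const)
  set Z : Set (EuclideanSpace ℝ (Fin n)) :=
    {ν | ‖ν‖ = 1 ∧ S ν ≤ (inner ℝ ν a : ℝ) + r₀} with hZdef
  have hZw : ∀ ν ∈ Z, (inner ℝ ν w : ℝ) < 0 := by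
    rintro ν ⟨h1, h2⟩
    by_contra h
    push_neg at h
    exact absurd h2 (not_le.mpr (hgpos ν h1 h))
  have hZc : IsCompact Z := by
    have hzz : Z = Metric.sphere (0 : EuclideanSpace ℝ (Fin n)) 1 ∩
        {ν | S ν - (inner ℝ ν a : ℝ) ≤ r₀} := by
      ext ν
      simp only [hZdef, mem_setOf_eq, mem_inter_iff, mem_sphere_zero_iff_norm,
        sub_le_iff_le_add, add_comm]
    rw [hzz]
    exact (isCompact_sphere 0 1).inter_right (isClosed_le hgcont continuous_const)
  obtain ⟨c, hc0, hc⟩ : ∃ c > 0, ∀ ν : EuclideanSpace ℝ (Fin n), ‖ν‖ = 1 →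
      -c ≤ (inner ℝ ν w : ℝ) → (inner ℝ ν a : ℝ) + r₀ < S ν := by
    rcases Z.eq_empty_or_nonempty with hZ | hZ
    · refine ⟨1, one_pos, fun ν h1 _ => ?_⟩
      by_contra h
      push_neg at h
      have : ν ∈ Z := ⟨h1, h⟩
      rw [hZ] at this
      exact this
    · obtain ⟨ν₀, hν₀Z, hν₀max⟩ : ∃ ν₀ ∈ Z,
          IsMaxOn (fun ν : EuclideanSpace ℝ (Fin n) => (inner ℝ ν w : ℝ)) Z ν₀ :=
        hZc.exists_isMaxOn hZ (Continuous.inner continuous_id continuous_const).continuousOn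
      have hβ0 : 0 < -(inner ℝ ν₀ w : ℝ) := by have := hZw ν₀ hν₀Z; linarith
      refine ⟨-(inner ℝ ν₀ w : ℝ) / 2, by linarith, fun ν h1 h2 => ?_⟩
      by_contra h
      push_neg at h
      have hνZ : ν ∈ Z := ⟨h1, h⟩
      have := hν₀max hνZ
      simp only [mem_setOf_eq] at this
      linarith
  set K : Set (EuclideanSpace ℝ (Fin n)) :=
    {ν | ‖ν‖ = 1 ∧ -c ≤ (inner ℝ ν w : ℝ)} with hKdef
  have hKc : IsCompact K := by
    have hkk : K = Metric.sphere (0 : EuclideanSpace ℝ (Fin n)) 1 ∩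
        {ν | -c ≤ (inner ℝ ν w : ℝ)} := by
      ext ν
      simp only [hKdef, mem_setOf_eq, mem_inter_iff, mem_sphere_zero_iff_norm]
    rw [hkk]
    exact (isCompact_sphere 0 1).inter_right
      (isClosed_le continuous_const (Continuous.inner continuous_id continuous_const))
  have hKne : K.Nonempty := by
    refine ⟨w, hw, ?_⟩
    rw [real_inner_self_eq_norm_sq, hw]
    norm_num
    linarith
  obtain ⟨ν₁, hν₁K, hν₁min⟩ : ∃ ν₁ ∈ K,
      IsMinOn (fun ν : EuclideanSpace ℝ (Fin n) => S ν - (inner ℝ ν a : ℝ)) K ν₁ :=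
    hKc.exists_isMinOn hKne hgcont.continuousOn
  set η : ℝ := S ν₁ - (inner ℝ ν₁ a : ℝ) - r₀ with hηdef
  have hη0 : 0 < η := by
    have := hc ν₁ hν₁K.1 hν₁K.2
    rw [hηdef]
    linarith
  set t : ℝ := η / 3 with htdef
  set t' : ℝ := min t (c * t) with ht'def
  have ht : 0 < t := by rw [htdef]; linarith
  have ht' : 0 < t' := lt_min ht (mul_pos hc0 ht)
  apply hmax t' ht'
  refine ⟨a + t • w, fun x hx => ?_⟩
  apply mem_of_forall_inner_le' hA hconv hne
  intro ν hν
  have hxd : ‖x - (a + t • w)‖ ≤ r₀ + t' := by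
    rw [Metric.mem_closedBall, dist_eq_norm] at hx
    exact hx
  have hsplit : (inner ℝ ν x : ℝ) =
      inner ℝ ν (x - (a + t • w)) + inner ℝ ν a + t * inner ℝ ν w := by
    rw [inner_sub_right, inner_add_right, real_inner_smul_right]
    ring
  have hCS1 : (inner ℝ ν (x - (a + t • w)) : ℝ) ≤ r₀ + t' := by
    calc (inner ℝ ν (x - (a + t • w)) : ℝ) ≤ ‖ν‖ * ‖x - (a + t • w)‖ := real_inner_le_norm _ _
      _ ≤ r₀ + t' := by rw [hν, one_mul]; exact hxd
  have hCSw : (inner ℝ ν w : ℝ) ≤ 1 := by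
    calc (inner ℝ ν w : ℝ) ≤ ‖ν‖ * ‖w‖ := real_inner_le_norm _ _
      _ = 1 := by rw [hν, hw, one_mul]
  show (inner ℝ ν x : ℝ) ≤ S ν
  rcases le_or_gt (-c) (inner ℝ ν w : ℝ) with hcase | hcase
  · have h1 : (inner ℝ ν a : ℝ) + r₀ + η ≤ S ν := by
      have h2 := hν₁min (⟨hν, hcase⟩ : ν ∈ K)
      simp only [mem_setOf_eq] at h2
      rw [hηdef]
      linarith
    have h3 : t * (inner ℝ ν w : ℝ) + t' ≤ η := by
      have h4 : t' ≤ t := min_le_left _ _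
      nlinarith
    linarith
  · have h1 : (inner ℝ ν a : ℝ) + r₀ ≤ S ν := hge ν hν
    have h3 : t * (inner ℝ ν w : ℝ) + t' ≤ 0 := by
      have h4 : t' ≤ c * t := min_le_right _ _
      nlinarith
    linarith

end Contact

/-- Theorem 4.1: if the farthest distance `d` from the center of a maximal
inscribed ball exceeds `2r₀`, then `δ_A(d - r₀) ≤ r₀/2`. -/
theorem modConv_le_of_maximal_inscribed_ball
    (n : ℕ) (A : Set (EuclideanSpace ℝ (Fin n)))
    (hA : IsCompact A) (hconv : Convex ℝ A) (huc : UnifConvex A)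
    (r₀ d : ℝ) (a : EuclideanSpace ℝ (Fin n))
    (hr₀ : r₀ = sSup {r : ℝ | 0 ≤ r ∧ ∃ c : EuclideanSpace ℝ (Fin n),
      Metric.closedBall c r ⊆ A})
    (ha : Metric.closedBall a r₀ ⊆ A)
    (hd : d = sSup ((fun x => ‖x - a‖) '' A))
    (h2 : 2 * r₀ < d) :
    modConv A (d - r₀) ≤ r₀ / 2 := by
  rcases A.eq_empty_or_nonempty with rfl | hne
  · exfalso
    have hR : {r : ℝ | 0 ≤ r ∧ ∃ c : EuclideanSpace ℝ (Fin n),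
        Metric.closedBall c r ⊆ (∅ : Set (EuclideanSpace ℝ (Fin n)))} = ∅ := by
      ext r
      simp only [mem_setOf_eq, mem_empty_iff_false, iff_false, not_and, not_exists]
      intro hr c hc
      obtain ⟨z, hz⟩ := (Metric.nonempty_closedBall (x := c)).mpr hr
      exact hc hz
    rw [hR, Real.sSup_empty] at hr₀
    rw [image_empty, Real.sSup_empty] at hd
    rw [hr₀, hd] at h2
    linarith
  have hr0 : 0 ≤ r₀ := hr₀ ▸ Real.sSup_nonneg (fun x hx => hx.1)
  -- farthest point
  obtain ⟨xs, hxsA, hxs⟩ := hA.exists_isMaxOn hne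
    ((continuous_id.sub continuous_const).norm.continuousOn :
      ContinuousOn (fun x : EuclideanSpace ℝ (Fin n) => ‖x - a‖) A)
  have hxs' : ∀ y ∈ A, ‖y - a‖ ≤ ‖xs - a‖ := fun y hy => hxs hy
  have hdx : d = ‖xs - a‖ := by
    rw [hd]
    exact IsGreatest.csSup_eq ⟨⟨xs, hxsA, rfl⟩, by rintro _ ⟨y, hy, rfl⟩; exact hxs' y hy⟩
  have hd0 : 0 < d := by linarith
  have hdr : r₀ < d - r₀ := by linarith
  have hdrpos : 0 < d - r₀ := by linarith
  have hxsa : xs - a ≠ 0 := by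
    intro h
    rw [h, norm_zero] at hdx
    linarith
  set w : EuclideanSpace ℝ (Fin n) := ‖xs - a‖⁻¹ • (xs - a) with hwdef
  have hnormpos : 0 < ‖xs - a‖ := by rw [← hdx]; exact hd0
  have hw : ‖w‖ = 1 := by
    rw [hwdef, norm_smul, norm_inv, norm_norm, inv_mul_cancel₀ hnormpos.ne']
  -- bounded above
  obtain ⟨M, hM⟩ := hA.isBounded.subset_closedBall 0
  have hbdd : BddAbove {r : ℝ | 0 ≤ r ∧ ∃ c : EuclideanSpace ℝ (Fin n),
      Metric.closedBall c r ⊆ A} := by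
    refine ⟨2 * M, ?_⟩
    rintro r ⟨hr, c, hc⟩
    have h1 : c ∈ A := hc (Metric.mem_closedBall_self hr)
    have h2' : c + r • w ∈ A := by
      apply hc
      simp only [Metric.mem_closedBall, dist_eq_norm, add_sub_cancel_left, norm_smul, hw,
        mul_one, Real.norm_eq_abs, abs_of_nonneg hr, le_refl]
    have hn1 : ‖c‖ ≤ M := mem_closedBall_zero_iff.mp (hM h1)
    have hn2 : ‖c + r • w‖ ≤ M := mem_closedBall_zero_iff.mp (hM h2')
    have hrn : ‖(c + r • w) - c‖ = r := by
      rw [add_sub_cancel_left, norm_smul, hw, mul_one, Real.norm_eq_abs, abs_of_nonneg hr]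
    have := norm_sub_le (c + r • w) c
    linarith
  have hmax : ∀ t' > 0, ¬ ∃ c : EuclideanSpace ℝ (Fin n),
      Metric.closedBall c (r₀ + t') ⊆ A := by
    rintro t' ht' ⟨c, hc⟩
    have hmem : r₀ + t' ∈ {r : ℝ | 0 ≤ r ∧ ∃ c : EuclideanSpace ℝ (Fin n),
        Metric.closedBall c r ⊆ A} := ⟨by linarith, c, hc⟩
    have := le_csSup hbdd hmem
    rw [← hr₀] at this
    linarith
  obtain ⟨ν, hν1, hνw, hν2⟩ := exists_contact' hA hconv hne hr0 ha hmax w hw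
  -- inner ν (xs - a) ≥ 0
  have hcst0 : (0 : ℝ) ≤ inner ℝ ν (xs - a) := by
    rw [hwdef, real_inner_smul_right] at hνw
    nlinarith [inv_pos.mpr hnormpos]
  set cst : ℝ := inner ℝ ν (xs - a) with hcstdef
  have hcstd : cst ≤ d := by
    calc cst ≤ ‖ν‖ * ‖xs - a‖ := real_inner_le_norm _ _
      _ = d := by rw [hν1, one_mul, hdx]
  -- main bound
  rw [modConv]
  apply Real.sSup_le _ (by linarith)
  rintro δ ⟨hδ0, hδA⟩
  set y : EuclideanSpace ℝ (Fin n) := a + r₀ • ν with hydef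
  have hyA : y ∈ A := by
    apply ha
    simp only [hydef, Metric.mem_closedBall, dist_eq_norm, add_sub_cancel_left, norm_smul,
      hν1, mul_one, Real.norm_eq_abs, abs_of_nonneg hr0, le_refl]
  have hxy : xs - y = (xs - a) - r₀ • ν := by rw [hydef]; abel
  set L : ℝ := ‖xs - y‖ with hLdef
  have hL2 : L ^ 2 = d ^ 2 - 2 * r₀ * cst + r₀ ^ 2 := by
    rw [hLdef, hxy, norm_sub_sq_real, ← hdx, real_inner_smul_right,
      real_inner_comm, ← hcstdef, norm_smul, hν1, mul_one, Real.norm_eq_abs,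
      sq_abs]
    ring
  have hLge : d - r₀ ≤ L := by
    nlinarith [norm_nonneg (xs - y), mul_nonneg hr0 (sub_nonneg.mpr hcstd)]
  have hL0 : 0 < L := by linarith
  set lam : ℝ := (d - r₀) / L with hlamdef
  have hlam0 : 0 ≤ lam := by positivity
  have hlam1 : lam ≤ 1 := (div_le_one hL0).mpr hLge
  set x₂ : EuclideanSpace ℝ (Fin n) := y + lam • (xs - y) with hx₂def
  have hx₂A : x₂ ∈ A := by
    have hcomb : (1 - lam) • y + lam • xs ∈ A :=
      hconv hyA hxsA (by linarith) hlam0 (by ring)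
    have : x₂ = (1 - lam) • y + lam • xs := by
      rw [hx₂def]; module
    rw [this]
    exact hcomb
  have hchord : ‖y - x₂‖ = d - r₀ := by
    have : y - x₂ = -(lam • (xs - y)) := by rw [hx₂def]; abel
    rw [this, norm_neg, norm_smul, Real.norm_eq_abs, abs_of_nonneg hlam0, ← hLdef,
      hlamdef, div_mul_cancel₀ _ hL0.ne']
  have hmid := hδA y hyA x₂ hx₂A hchord
  set p : EuclideanSpace ℝ (Fin n) := midpoint ℝ y x₂ + δ • ν with hpdef
  have hpA : p ∈ A := by
    apply hmid
    simp only [hpdef, Metric.mem_closedBall, dist_eq_norm, add_sub_cancel_left, norm_smul,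
      hν1, mul_one, Real.norm_eq_abs, abs_of_nonneg hδ0, le_refl]
  have hp := hν2 p hpA
  -- compute inner products
  have hiy : (inner ℝ ν y : ℝ) = inner ℝ ν a + r₀ := by
    rw [hydef, inner_add_right, real_inner_smul_right, real_inner_self_eq_norm_sq, hν1,
      one_pow, mul_one]
  have hix₂ : (inner ℝ ν x₂ : ℝ) = inner ℝ ν y + lam * (inner ℝ ν xs - inner ℝ ν y) := by
    rw [hx₂def, inner_add_right, real_inner_smul_right, inner_sub_right]
  have hixs : (inner ℝ ν xs : ℝ) = inner ℝ ν a + cst := by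
    rw [hcstdef, inner_sub_right]; ring
  have hip : (inner ℝ ν p : ℝ) =
      (2 : ℝ)⁻¹ * (inner ℝ ν y + inner ℝ ν x₂) + δ := by
    rw [hpdef, inner_add_right, real_inner_smul_right, real_inner_self_eq_norm_sq, hν1,
      one_pow, mul_one, midpoint_eq_smul_add, invOf_eq_inv, real_inner_smul_right,
      inner_add_right]
  rw [hip, hix₂, hixs, hiy] at hp
  nlinarith [mul_nonneg hlam0 hcst0, mul_nonneg hlam0 hr0]
end

section
/- Let A ⊂ ℝⁿ be a compact uniformly convex set with modulus of convexity δ_A, and suppose there is a constant C > 0 with δ_A(ε) ≥ C·ε² for all ε ∈ (0, diam A). Let r₀ = sup{r ≥ 0 : there exists a ∈ ℝⁿ with B_r(a) ⊆ A}, let a ∈ ℝⁿ be such that B_{r₀}(a) ⊆ A, and let d = sup_{x∈A} ‖x − a‖. Then d ≤ max{2r₀, r₀ + √(r₀/(2C))}. -/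
open Set Metric Pointwise

set_option maxHeartbeats 2000000 in
/-- for a set with modulus of convexity of quadratic order,
`d ≤ max{2r₀, r₀ + √(r₀/(2C))}`. -/
theorem farthest_dist_le_of_quadratic_modConv
    (n : ℕ) (A : Set (EuclideanSpace ℝ (Fin n)))
    (hA : IsCompact A) (hconv : Convex ℝ A) (huc : UnifConvex A)
    (Cq : ℝ) (hCq : 0 < Cq)
    (hquad : ∀ ε ∈ Set.Ioo 0 (Metric.diam A), Cq * ε^2 ≤ modConv A ε)
    (r₀ d : ℝ) (a : EuclideanSpace ℝ (Fin n))
    (hr₀ : r₀ = sSup {r : ℝ | 0 ≤ r ∧ ∃ c : EuclideanSpace ℝ (Fin n),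
      Metric.closedBall c r ⊆ A})
    (ha : Metric.closedBall a r₀ ⊆ A)
    (hd : d = sSup ((fun x => ‖x - a‖) '' A)) :
    d ≤ max (2 * r₀) (r₀ + Real.sqrt (r₀ / (2 * Cq))) := by
  have hr0nn : 0 ≤ r₀ := by
    rw [hr₀]; exact Real.sSup_nonneg (fun x hx => hx.1)
  have haA : a ∈ A := ha (Metric.mem_closedBall_self hr0nn)
  by_contra hcon
  obtain ⟨hd2, hds⟩ := max_lt_iff.mp (not_le.mp hcon)
  set s : ℝ := Real.sqrt (r₀ / (2 * Cq)) with hsdef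
  have hs0 : 0 ≤ s := Real.sqrt_nonneg _
  -- d attained
  have hcont : Continuous fun x : EuclideanSpace ℝ (Fin n) => ‖x - a‖ :=
    (continuous_id.sub continuous_const).norm
  have himg : IsCompact ((fun x => ‖x - a‖) '' A) := hA.image hcont
  have hne : ((fun x => ‖x - a‖) '' A).Nonempty := ⟨_, mem_image_of_mem _ haA⟩
  obtain ⟨x, hxA, hxd⟩ : ∃ x ∈ A, ‖x - a‖ = d := by
    have := himg.sSup_mem hne
    rw [← hd] at this
    obtain ⟨x, hx1, hx2⟩ := this
    exact ⟨x, hx1, hx2⟩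
  have hdle : ∀ y ∈ A, ‖y - a‖ ≤ d := by
    intro y hy
    rw [hd]
    exact le_csSup himg.bddAbove (mem_image_of_mem _ hy)
  have hd0 : 0 < d := lt_of_le_of_lt (by linarith) hds
  -- n = 0 case
  rcases Nat.eq_zero_or_pos n with hn | hn
  · subst hn
    have : x = a := Subsingleton.elim x a
    rw [this, sub_self, norm_zero] at hxd
    linarith
  -- boundedness of the radii set
  set S : Set ℝ := {r : ℝ | 0 ≤ r ∧ ∃ c : EuclideanSpace ℝ (Fin n),
      Metric.closedBall c r ⊆ A} with hSdef
  have hb : Bornology.IsBounded A := hA.isBounded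
  have hSbdd : BddAbove S := by
    refine ⟨Metric.diam A, ?_⟩
    rintro r ⟨hr0, c, hc⟩
    set e : EuclideanSpace ℝ (Fin n) := EuclideanSpace.single (⟨0, hn⟩ : Fin n) (1 : ℝ) with he
    have hne : ‖e‖ = 1 := by rw [he, EuclideanSpace.norm_single]; norm_num
    have h1 : c ∈ A := hc (Metric.mem_closedBall_self hr0)
    have h2 : c + r • e ∈ A := by
      apply hc
      rw [Metric.mem_closedBall, dist_eq_norm, add_sub_cancel_left, norm_smul, hne]
      simp [abs_of_nonneg hr0]
    have := dist_le_diam_of_mem hb h2 h1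
    rw [dist_eq_norm, add_sub_cancel_left, norm_smul, hne] at this
    simpa [abs_of_nonneg hr0] using this
  have hballS : ∀ (c : EuclideanSpace ℝ (Fin n)) (ρ : ℝ), 0 ≤ ρ →
      Metric.closedBall c ρ ⊆ A → ρ ≤ r₀ := by
    intro c ρ h0 hsub
    rw [hr₀]
    exact le_csSup hSbdd ⟨h0, c, hsub⟩
  -- key lemma: midpoint balls from the modulus
  have KB : ∀ x₁ ∈ A, ∀ x₂ ∈ A, 0 < ‖x₁ - x₂‖ → ‖x₁ - x₂‖ < Metric.diam A →
      ∀ ρ : ℝ, 0 ≤ ρ → ρ < Cq * ‖x₁ - x₂‖ ^ 2 →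
      Metric.closedBall (midpoint ℝ x₁ x₂) ρ ⊆ A := by
    intro x₁ h₁ x₂ h₂ hpos hlt ρ hρ0 hρ
    have h1 : Cq * ‖x₁ - x₂‖ ^ 2 ≤ modConv A ‖x₁ - x₂‖ := hquad _ ⟨hpos, hlt⟩
    have hlt2 : ρ < modConv A ‖x₁ - x₂‖ := lt_of_lt_of_le hρ h1
    have hDne : ({δ : ℝ | 0 ≤ δ ∧ ∀ y₁ ∈ A, ∀ y₂ ∈ A, ‖y₁ - y₂‖ = ‖x₁ - x₂‖ →
        Metric.closedBall (midpoint ℝ y₁ y₂) δ ⊆ A}).Nonempty := by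
      refine ⟨0, le_refl 0, ?_⟩
      intro y₁ hy₁ y₂ hy₂ _
      rw [Metric.closedBall_zero]
      exact singleton_subset_iff.2
        (hconv.segment_subset hy₁ hy₂ (midpoint_mem_segment _ _))
    rw [modConv] at hlt2
    obtain ⟨δ, hδmem, hρδ⟩ := exists_lt_of_lt_csSup hDne hlt2
    exact (Metric.closedBall_subset_closedBall hρδ.le).trans (hδmem.2 x₁ h₁ x₂ h₂ rfl)
  rcases eq_or_lt_of_le hr0nn with h0 | hr0pos
  · -- r₀ = 0
    have hs' : s = 0 := by rw [hsdef, ← h0]; simp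
    obtain ⟨y, hy⟩ : ∃ y : EuclideanSpace ℝ (Fin n), y = midpoint ℝ a x := ⟨_, rfl⟩
    have hyA : y ∈ A := by
      rw [hy]; exact hconv.segment_subset haA hxA (midpoint_mem_segment _ _)
    have hay : ‖a - y‖ = d / 2 := by
      rw [hy, midpoint_eq_smul_add]
      have : a - (⅟(2:ℝ)) • (a + x) = (⅟(2:ℝ)) • (a - x) := by
        rw [invOf_eq_inv]
        module
      rw [this, norm_smul, invOf_eq_inv, norm_sub_rev, hxd]
      simp [abs_of_nonneg]
      ring
    have hdiam : d ≤ Metric.diam A := by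
      have := dist_le_diam_of_mem hb hxA haA
      rwa [dist_eq_norm, hxd] at this
    have hρpos : 0 < Cq * (d / 2) ^ 2 / 2 := by positivity
    have hsub := KB a haA y hyA (by rw [hay]; positivity)
      (by rw [hay]; linarith) (Cq * (d / 2) ^ 2 / 2) hρpos.le
      (by rw [hay]; nlinarith)
    have := hballS _ _ hρpos.le hsub
    rw [← h0] at this
    linarith
  · -- r₀ > 0
    have hdr : r₀ < d := by linarith
    -- diam ≥ d + r₀
    have hdiam : d + r₀ ≤ Metric.diam A := by
      obtain ⟨x', hx'⟩ : ∃ x' : EuclideanSpace ℝ (Fin n), x' = a - (r₀ / d) • (x - a) := ⟨_, rfl⟩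
      have hx'A : x' ∈ A := by
        apply ha
        rw [Metric.mem_closedBall, dist_eq_norm, hx']
        have : a - (r₀ / d) • (x - a) - a = -((r₀ / d) • (x - a)) := by module
        rw [this, norm_neg, norm_smul, hxd, Real.norm_eq_abs,
          abs_of_nonneg (by positivity), div_mul_cancel₀ _ hd0.ne']
      have hdist : dist x x' = d + r₀ := by
        rw [dist_eq_norm, hx']
        have : x - (a - (r₀ / d) • (x - a)) = (1 + r₀ / d) • (x - a) := by module
        rw [this, norm_smul, hxd, Real.norm_eq_abs, abs_of_nonneg (by positivity)]
        field_simp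
      have := dist_le_diam_of_mem hb hxA hx'A
      rwa [hdist] at this
    obtain ⟨η, hη⟩ : ∃ t : ℝ, t = Cq * (d - r₀) ^ 2 - r₀ / 2 := ⟨_, rfl⟩
    have hs2 : s ^ 2 = r₀ / (2 * Cq) := Real.sq_sqrt (by positivity)
    have hηpos : 0 < η := by
      have h1 : s < d - r₀ := by linarith
      have h2 : s ^ 2 < (d - r₀) ^ 2 := by nlinarith
      rw [hη]
      rw [hs2] at h2
      have h3 := mul_lt_mul_of_pos_left h2 hCq
      have h4 : Cq * (r₀ / (2 * Cq)) = r₀ / 2 := by field_simp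
      linarith
    obtain ⟨δ₀, hδ₀⟩ : ∃ t : ℝ, t = min r₀ η := ⟨_, rfl⟩
    have hδ₀pos : 0 < δ₀ := hδ₀ ▸ lt_min hr0pos hηpos
    have hδ₀r : δ₀ ≤ r₀ := hδ₀ ▸ min_le_left _ _
    have hδ₀η : δ₀ ≤ η := hδ₀ ▸ min_le_right _ _
    obtain ⟨r', hr'⟩ : ∃ t : ℝ, t = r₀ - δ₀ / 2 := ⟨_, rfl⟩
    have hr'pos : 0 < r' := by rw [hr']; linarith
    have hr'lt : r' < r₀ := by rw [hr']; linarith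
    have hdr' : 0 < d - r' := by linarith
    have hkey : r₀ / 2 + η ≤ Cq * (d - r') ^ 2 := by
      have h1 : d - r₀ ≤ d - r' := by linarith
      have h2 : (d - r₀) ^ 2 ≤ (d - r') ^ 2 := by nlinarith
      have h3 := mul_le_mul_of_nonneg_left h2 hCq.le
      rw [hη]
      linarith
    obtain ⟨R, hR⟩ : ∃ t : ℝ, t = r' / 2 + Cq * (d - r') ^ 2 - η / 2 := ⟨_, rfl⟩
    have hRr : r₀ < R := by
      rw [hR]
      linarith [hkey]
    obtain ⟨m₀, hm₀⟩ : ∃ z : EuclideanSpace ℝ (Fin n), z = midpoint ℝ x a := ⟨_, rfl⟩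
    have hball : Metric.closedBall m₀ R ⊆ A := by
      intro y hy
      obtain ⟨ζ, hζ⟩ : ∃ z : EuclideanSpace ℝ (Fin n), z = y - m₀ := ⟨_, rfl⟩
      have hζR : ‖ζ‖ ≤ R := by
        rw [hζ, ← dist_eq_norm]
        exact hy
      by_cases hcase : ‖ζ‖ ≤ r' / 2
      · have h2ζ : a + (2 : ℝ) • ζ ∈ A := by
          apply ha
          rw [Metric.mem_closedBall, dist_eq_norm, add_sub_cancel_left, norm_smul]
          simp only [Real.norm_ofNat]
          linarith
        have hy' : y = midpoint ℝ x (a + (2 : ℝ) • ζ) := by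
          rw [midpoint_eq_smul_add, invOf_eq_inv]
          have hyy : y = m₀ + ζ := by rw [hζ]; module
          rw [hyy, hm₀, midpoint_eq_smul_add, invOf_eq_inv]
          module
        rw [hy']
        exact hconv.segment_subset hxA h2ζ (midpoint_mem_segment _ _)
      · push_neg at hcase
        have htpos : 0 < ‖ζ‖ := lt_of_le_of_lt (by positivity) hcase
        obtain ⟨v, hv⟩ : ∃ z : EuclideanSpace ℝ (Fin n), z = ‖ζ‖⁻¹ • ζ := ⟨_, rfl⟩
        have hvnorm : ‖v‖ = 1 := by
          rw [hv, norm_smul, norm_inv, norm_norm, inv_mul_cancel₀ htpos.ne']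
        obtain ⟨x₂, hx₂⟩ : ∃ z : EuclideanSpace ℝ (Fin n), z = a + r' • v := ⟨_, rfl⟩
        have hx₂A : x₂ ∈ A := by
          apply ha
          rw [Metric.mem_closedBall, dist_eq_norm, hx₂, add_sub_cancel_left,
            norm_smul, hvnorm, mul_one, Real.norm_eq_abs, abs_of_nonneg hr'pos.le]
          linarith
        have hεlow : d - r' ≤ ‖x - x₂‖ := by
          have h1 : x - x₂ = (x - a) - r' • v := by rw [hx₂]; module
          have := norm_sub_norm_le (x - a) (r' • v)
          rw [hxd, norm_smul, hvnorm, mul_one, Real.norm_eq_abs,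
            abs_of_nonneg hr'pos.le] at this
          rw [h1]
          linarith
        have hεhigh : ‖x - x₂‖ ≤ d + r' := by
          have h1 : x - x₂ = (x - a) - r' • v := by rw [hx₂]; module
          have := norm_sub_le (x - a) (r' • v)
          rw [hxd, norm_smul, hvnorm, mul_one, Real.norm_eq_abs,
            abs_of_nonneg hr'pos.le] at this
          rw [h1]
          linarith
        have hεpos : 0 < ‖x - x₂‖ := lt_of_lt_of_le hdr' hεlow
        have hεdiam : ‖x - x₂‖ < Metric.diam A := by
          calc ‖x - x₂‖ ≤ d + r' := hεhigh
          _ < d + r₀ := by linarith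
          _ ≤ Metric.diam A := hdiam
        obtain ⟨ρ, hρ⟩ : ∃ t : ℝ, t = ‖ζ‖ - r' / 2 := ⟨_, rfl⟩
        have hρpos : 0 < ρ := by rw [hρ]; linarith
        have hρlt : ρ < Cq * ‖x - x₂‖ ^ 2 := by
          have h1 : ρ ≤ Cq * (d - r') ^ 2 - η / 2 := by
            rw [hρ]; rw [hR] at hζR; linarith
          have h2 : (d - r') ^ 2 ≤ ‖x - x₂‖ ^ 2 := by nlinarith
          nlinarith
        have hmid : midpoint ℝ x x₂ = m₀ + (r' / 2) • v := by
          simp only [hx₂, hm₀, midpoint_eq_smul_add, invOf_eq_inv]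
          module
        have hymem : y ∈ Metric.closedBall (midpoint ℝ x x₂) ρ := by
          rw [Metric.mem_closedBall, dist_eq_norm, hmid]
          have h1 : y - (m₀ + (r' / 2) • v) = ζ - (r' / 2) • v := by
            rw [hζ]; module
          have h2 : ζ = ‖ζ‖ • v := by
            rw [hv, smul_smul, mul_inv_cancel₀ htpos.ne', one_smul]
          rw [h1, h2, ← sub_smul, norm_smul, hvnorm, mul_one, Real.norm_eq_abs,
            abs_of_nonneg (by linarith), hρ]
        have := KB x hxA x₂ hx₂A hεpos hεdiam ρ hρpos.le hρlt hymem
        exact this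
    have := hballS m₀ R (by linarith) hball
    linarith
end
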